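/- arXiv:1704.02800 — 2 statements merged into one kernel-verified Lean document; each statement's English description precedes it below -/
import Mathlib

section
/- Let d ≥ 2 and let (Γ,γ) be a (d+1)-colored graph of order 2p. Then ω_G(Γ) = ((d−1)!/2)·( d + (d/2)(d−1)p − Σ_{{r,s}} g_{rs} ), where the sum ranges over all unordered pairs {r,s} of distinct colors in Δ_d. Consequently, for d ≥ 3 the G-degree of any (d+1)-colored graph is a non-negative integer multiple of (d−1)!/2. -/
/-!
Basic framework: edge-colored graphs à la crystallization theory.

A `(d+1)`-colored graph (finite connected multigraph, regular of degree `d+1`, with a proper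
edge-coloring by the color set `C`, `#C = d+1`) is encoded by giving, for each color `c`,
the perfect matching formed by the `c`-colored edges, i.e. a fixed-point-free involution
`inv c` on the vertex set `V` (connectedness is the separate predicate `Conn`).
-/

structure CGraph (C V : Type) where
  inv : C → V → V
  invol : ∀ c v, inv c (inv c v) = v
  no_fixed : ∀ c v, inv c v ≠ v

namespace CGraph

variable {C V : Type}

/-- `g G B` = number of connected components of the spanning subgraph `Γ_B` consisting of
the edges whose color lies in `B`. -/
noncomputable def g (G : CGraph C V) (B : Set C) : ℕ :=
  Nat.card (Quotient (Relation.EqvGen.setoid (fun v w : V => ∃ c ∈ B, G.inv c v = w)))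

/-- connectedness of the colored graph -/
def Conn (G : CGraph C V) : Prop := G.g Set.univ = 1

/-- the spanning subgraph `Γ_B` of edges colored in `B`, as a colored graph with color set `B` -/
def restrict (G : CGraph C V) (B : Set C) : CGraph B V where
  inv c v := G.inv c.val v
  invol c v := G.invol c.val v
  no_fixed c v := G.no_fixed c.val v

/-- reachability in the colored graph -/
def reach (G : CGraph C V) : V → V → Prop :=
  Relation.EqvGen (fun v w : V => ∃ c, G.inv c v = w)

/-- the connected component of `G` containing `v0`, as a colored graph on the vertices
reachable from `v0` -/
def component (G : CGraph C V) (v0 : V) : CGraph C {w : V // G.reach v0 w} where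
  inv c w := ⟨G.inv c w.val,
    Relation.EqvGen.trans _ _ _ w.property (Relation.EqvGen.rel _ _ ⟨c, rfl⟩)⟩
  invol c w := Subtype.ext (G.invol c w.val)
  no_fixed c w h := G.no_fixed c w.val (congrArg Subtype.val h)

/-- A cyclic permutation of the (finite) color set: a permutation consisting of a single cycle
through all the colors.  Cyclic permutations `ε = (ε_0, …, ε_d)` of the color set, up to
rotation, correspond bijectively to such permutations `σ` (via `σ : ε_j ↦ ε_{j+1}`), and
taking the inverse cyclic permutation corresponds to `σ ↦ σ⁻¹`. -/
def IsCyclicPerm (σ : Equiv.Perm C) : Prop := σ.IsCycle ∧ ∀ c, σ c ≠ c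

/-- Euler characteristic `χ_σ(Γ) = Σ_{j} g_{ε_j ε_{j+1}} + (1-(n-1))·p` of the surface of the
regular embedding associated with the cyclic permutation `σ`; here `n = #C`, the graph has
order `2p` (i.e. `p = (#V)/2`), and the consecutive pairs `{ε_j, ε_{j+1}}` are exactly the
pairs `{c, σ c}`, `c ∈ C`. -/
noncomputable def chi (G : CGraph C V) (σ : Equiv.Perm C) : ℚ :=
  (∑ᶠ c : C, (G.g {c, σ c} : ℚ)) +
    (2 - (Nat.card C : ℚ)) * ((Nat.card V : ℚ) / 2)

/-- the genus `ρ_σ` of the regular embedding associated with `σ`: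
for a connected graph it is `(2 - χ_σ)/2`; in general (`g G Set.univ` connected components)
it is the sum of the genera of the connected components, matching the convention that the
genus/G-degree of a disconnected colored graph is the sum over its connected components. -/
noncomputable def rho (G : CGraph C V) (σ : Equiv.Perm C) : ℚ :=
  (2 * (G.g Set.univ : ℚ) - G.chi σ) / 2

/-- the Gurau degree `ω_G(Γ) = Σ ρ_ε(Γ)`, the sum over the cyclic permutations of the color
set up to inverse; each class `{σ, σ⁻¹}` has `ρ_σ = ρ_{σ⁻¹}`, whence the division by `2`. -/
noncomputable def omegaG (G : CGraph C V) : ℚ :=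
  (∑ᶠ σ : {σ : Equiv.Perm C // IsCyclicPerm σ}, G.rho σ.val) / 2

/-- bipartiteness -/
def Bipartite (G : CGraph C V) : Prop := ∃ f : V → Bool, ∀ c v, f (G.inv c v) ≠ f v

/-- color-preserving isomorphism of colored graphs -/
def IsIso {V' : Type} (G : CGraph C V) (G' : CGraph C V') : Prop :=
  ∃ e : V ≃ V', ∀ c v, e (G.inv c v) = G'.inv c (e v)

end CGraph


open Relation

section RelCount

variable {α : Type}

/-- number of classes of the equivalence closure of a relation -/
noncomputable def nclass (r : α → α → Prop) : ℕ :=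
  Nat.card (Quotient (Relation.EqvGen.setoid r))

lemma eqvGen_mono' {r p : α → α → Prop} (h : ∀ x y, r x y → EqvGen p x y) :
    ∀ x y, EqvGen r x y → EqvGen p x y := by
  intro x y hxy
  have := Relation.EqvGen.mono (r := r) (p := EqvGen p) h _ _ hxy
  rwa [Equivalence.eqvGen_eq (Relation.EqvGen.is_equivalence p)] at this

lemma nclass_le [Finite α] {r p : α → α → Prop} (h : ∀ x y, r x y → EqvGen p x y) :
    nclass p ≤ nclass r := by
  have hs : Function.Surjective
      (Quotient.map' (s₁ := EqvGen.setoid r) (s₂ := EqvGen.setoid p) id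
        (fun x y hxy => eqvGen_mono' h x y hxy)) := by
    intro q
    obtain ⟨x, rfl⟩ := Quotient.exists_rep q
    exact ⟨Quotient.mk'' x, rfl⟩
  exact Nat.card_le_card_of_surjective _ hs

/-- add a single (directed) edge to a relation -/
def redge (r : α → α → Prop) (a b : α) : α → α → Prop :=
  fun x y => r x y ∨ (x = a ∧ y = b)

lemma eqvGen_redge_iff {r : α → α → Prop} {a b : α} {x y : α} :
    EqvGen (redge r a b) x y ↔ EqvGen r x y ∨ (EqvGen r x a ∧ EqvGen r b y)
      ∨ (EqvGen r x b ∧ EqvGen r a y) := by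
  have E := Relation.EqvGen.is_equivalence r
  constructor
  · intro h
    induction h with
    | rel u v huv =>
      rcases huv with h | ⟨rfl, rfl⟩
      · exact Or.inl (EqvGen.rel _ _ h)
      · exact Or.inr (Or.inl ⟨E.refl _, E.refl _⟩)
    | refl u => exact Or.inl (E.refl u)
    | symm u v _ ih =>
      rcases ih with h | ⟨h1, h2⟩ | ⟨h1, h2⟩
      · exact Or.inl (E.symm h)
      · exact Or.inr (Or.inr ⟨E.symm h2, E.symm h1⟩)
      · exact Or.inr (Or.inl ⟨E.symm h2, E.symm h1⟩)
    | trans u v w _ _ ih1 ih2 =>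
      rcases ih1 with h | ⟨h1, h2⟩ | ⟨h1, h2⟩ <;>
        rcases ih2 with h' | ⟨h1', h2'⟩ | ⟨h1', h2'⟩
      · exact Or.inl (E.trans h h')
      · exact Or.inr (Or.inl ⟨E.trans h h1', h2'⟩)
      · exact Or.inr (Or.inr ⟨E.trans h h1', h2'⟩)
      · exact Or.inr (Or.inl ⟨h1, E.trans h2 h'⟩)
      · exact Or.inr (Or.inl ⟨h1, h2'⟩)
      · exact Or.inl (E.trans h1 h2')
      · exact Or.inr (Or.inr ⟨h1, E.trans h2 h'⟩)
      · exact Or.inl (E.trans h1 h2')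
      · exact Or.inr (Or.inr ⟨h1, h2'⟩)
  · intro h
    have hsub : ∀ u v, EqvGen r u v → EqvGen (redge r a b) u v :=
      fun u v huv => Relation.EqvGen.mono (fun x y hxy => Or.inl hxy) _ _ huv
    have hab : EqvGen (redge r a b) a b := EqvGen.rel _ _ (Or.inr ⟨rfl, rfl⟩)
    have E' := Relation.EqvGen.is_equivalence (redge r a b)
    rcases h with h | ⟨h1, h2⟩ | ⟨h1, h2⟩
    · exact hsub _ _ h
    · exact E'.trans (hsub _ _ h1) (E'.trans hab (hsub _ _ h2))
    · exact E'.trans (hsub _ _ h1) (E'.trans (E'.symm hab) (hsub _ _ h2))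

lemma nclass_le_redge_add_one [Finite α] (r : α → α → Prop) (a b : α) :
    nclass r ≤ nclass (redge r a b) + 1 := by
  classical
  set s1 : Setoid α := EqvGen.setoid r
  set s2 : Setoid α := EqvGen.setoid (redge r a b)
  have E := Relation.EqvGen.is_equivalence r
  have hle : ∀ x y, EqvGen r x y → EqvGen (redge r a b) x y :=
    fun x y h => Relation.EqvGen.mono (fun u v huv => Or.inl huv) _ _ h
  let f : Quotient s1 → Option (Quotient s2) :=
    Quotient.lift (fun x => if EqvGen r x b ∧ ¬ EqvGen r a b then none
      else some (Quotient.mk s2 x))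
      (by
        intro x y hxy
        have hxy' : EqvGen r x y := hxy
        by_cases hb : EqvGen r x b ∧ ¬ EqvGen r a b
        · rw [if_pos hb, if_pos ⟨E.trans (E.symm hxy') hb.1, hb.2⟩]
        · have hb' : ¬ (EqvGen r y b ∧ ¬ EqvGen r a b) := by
            intro ⟨h1, h2⟩; exact hb ⟨E.trans hxy' h1, h2⟩
          rw [if_neg hb, if_neg hb', Quotient.sound (hle _ _ hxy')])
  have hinj : Function.Injective f := by
    intro q1 q2
    obtain ⟨x, rfl⟩ := Quotient.exists_rep q1
    obtain ⟨y, rfl⟩ := Quotient.exists_rep q2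
    simp only [f, Quotient.lift_mk]
    by_cases hx : EqvGen r x b ∧ ¬ EqvGen r a b <;>
      by_cases hy : EqvGen r y b ∧ ¬ EqvGen r a b
    · intro _
      exact Quotient.sound (E.trans hx.1 (E.symm hy.1))
    · rw [if_pos hx, if_neg hy]; intro h; exact absurd h (by simp)
    · rw [if_neg hx, if_pos hy]; intro h; exact absurd h (by simp)
    · rw [if_neg hx, if_neg hy]
      intro h
      have h2 : Quotient.mk s2 x = Quotient.mk s2 y := by
        simpa using h
      have h3 : EqvGen (redge r a b) x y := Quotient.exact h2
      rcases eqvGen_redge_iff.mp h3 with h | ⟨h1, h2'⟩ | ⟨h1, h2'⟩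
      · exact Quotient.sound h
      · -- x ~ a, b ~ y : then y ~ b so by hy, EqvGen r a b, so x ~ y
        have hyb : EqvGen r y b := E.symm h2'
        have hab : EqvGen r a b := by
          by_contra hab; exact hy ⟨hyb, hab⟩
        exact Quotient.sound (E.trans h1 (E.trans hab (E.symm hyb)))
      · have hxb : EqvGen r x b := h1
        have hab : EqvGen r a b := by
          by_contra hab; exact hx ⟨hxb, hab⟩
        exact Quotient.sound (E.trans hxb (E.trans (E.symm hab) h2'))
  haveI : Fintype (Quotient s2) := Fintype.ofFinite _
  calc nclass r ≤ Nat.card (Option (Quotient s2)) :=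
        Nat.card_le_card_of_injective f hinj
    _ = nclass (redge r a b) + 1 := by
        have : Nat.card (Option (Quotient s2)) = Nat.card (Quotient s2) + 1 := by
          haveI : Fintype (Quotient s2) := Fintype.ofFinite _
          simp [Nat.card_eq_fintype_card]
        exact this

lemma nclass_redge_add_one_le [Finite α] {r : α → α → Prop} {a b : α}
    (h : ¬ EqvGen r a b) : nclass (redge r a b) + 1 ≤ nclass r := by
  classical
  set s1 : Setoid α := EqvGen.setoid r
  set s2 : Setoid α := EqvGen.setoid (redge r a b)
  have E := Relation.EqvGen.is_equivalence r
  have hle : ∀ x y, EqvGen r x y → EqvGen (redge r a b) x y :=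
    fun x y hh => Relation.EqvGen.mono (fun u v huv => Or.inl huv) _ _ hh
  let f : {q : Quotient s1 // q ≠ Quotient.mk s1 b} → Quotient s2 :=
    fun q => Quotient.lift (fun x => Quotient.mk s2 x)
      (by intro x y hxy
          have hxy' : EqvGen r x y := hxy
          exact Quotient.sound (hle x y hxy')) q.1
  have hsurj : Function.Surjective f := by
    intro q
    obtain ⟨x, rfl⟩ := Quotient.exists_rep q
    by_cases hxb : EqvGen r x b
    · refine ⟨⟨Quotient.mk s1 a, ?_⟩, ?_⟩
      · intro hq
        exact h (Quotient.exact hq)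
      · show Quotient.mk s2 a = Quotient.mk s2 x
        refine Quotient.sound ?_
        have hab : EqvGen (redge r a b) a b := EqvGen.rel _ _ (Or.inr ⟨rfl, rfl⟩)
        have E' := Relation.EqvGen.is_equivalence (redge r a b)
        exact E'.trans hab (E'.symm (hle _ _ hxb))
    · refine ⟨⟨Quotient.mk s1 x, ?_⟩, rfl⟩
      intro hq
      exact hxb (Quotient.exact hq)
  have hcard : Nat.card {q : Quotient s1 // q ≠ Quotient.mk s1 b} + 1 = nclass r := by
    haveI : Fintype (Quotient s1) := Fintype.ofFinite _
    have e1 : nclass r = Fintype.card (Quotient s1) := Nat.card_eq_fintype_card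
    have e2 : Nat.card {q : Quotient s1 // q ≠ Quotient.mk s1 b}
        = Fintype.card {q : Quotient s1 // q ≠ Quotient.mk s1 b} := Nat.card_eq_fintype_card
    rw [e1, e2, Fintype.card_subtype_compl (p := fun q => q = Quotient.mk s1 b)]
    have h1 : Fintype.card {q : Quotient s1 // q = Quotient.mk s1 b} = 1 :=
      Fintype.card_subtype_eq _
    rw [h1]
    have : 0 < Fintype.card (Quotient s1) := Fintype.card_pos_iff.mpr ⟨Quotient.mk s1 b⟩
    omega
  calc nclass (redge r a b) + 1 ≤ Nat.card {q : Quotient s1 // q ≠ Quotient.mk s1 b} + 1 :=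
        Nat.add_le_add_right (Nat.card_le_card_of_surjective f hsurj) 1
    _ = nclass r := hcard

lemma nclass_redge_eq [Finite α] {r : α → α → Prop} {a b : α}
    (h : EqvGen r a b) : nclass (redge r a b) = nclass r := by
  have h1 : nclass (redge r a b) ≤ nclass r :=
    nclass_le (fun x y hxy => EqvGen.rel _ _ (Or.inl hxy))
  have h2 : nclass r ≤ nclass (redge r a b) :=
    nclass_le (fun x y hxy => by
      rcases hxy with hxy | ⟨rfl, rfl⟩
      · exact EqvGen.rel _ _ hxy
      · exact h)
  omega

lemma eqvGen_eq_of_subsingleton {r : α → α → Prop} (h : ∀ x y, r x y → x = y)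
    {x y : α} (hxy : EqvGen r x y) : x = y := by
  induction hxy with
  | rel u v huv => exact h u v huv
  | refl u => rfl
  | symm u v _ ih => exact ih.symm
  | trans u v w _ _ ih1 ih2 => exact ih1.trans ih2

lemma nclass_eq_card [Finite α] {r : α → α → Prop} (h : ∀ x y, r x y → x = y) :
    nclass r = Nat.card α := by
  have hbij : Function.Bijective (Quotient.mk (EqvGen.setoid r) : α → _) := by
    constructor
    · intro x y hxy
      exact eqvGen_eq_of_subsingleton h (Quotient.exact hxy)
    · intro q; exact Quotient.exists_rep q
  exact (Nat.card_eq_of_bijective _ hbij).symm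

lemma nclass_pos [Finite α] [Nonempty α] (r : α → α → Prop) : 0 < nclass r := by
  have : Nonempty (Quotient (EqvGen.setoid r)) := ⟨Quotient.mk _ (Classical.arbitrary α)⟩
  haveI : Finite (Quotient (EqvGen.setoid r)) := Quotient.finite _
  exact Nat.card_pos

end RelCount
section PermCount

open Equiv Relation

variable {α : Type} [DecidableEq α]

/-- one-step relation of a permutation -/
def pstep (π : Equiv.Perm α) : α → α → Prop := fun x y => π x = y

/-- number of cycles (orbits, including fixed points) of a permutation -/
noncomputable def cyc (π : Equiv.Perm α) : ℕ := nclass (pstep π)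

lemma eqvGen_pstep_pow (π : Equiv.Perm α) (k : ℕ) (x : α) :
    EqvGen (pstep π) x ((π ^ k) x) := by
  induction k with
  | zero => exact EqvGen.refl x
  | succ k ih =>
    have : (π ^ (k+1)) x = π ((π ^ k) x) := by
      rw [pow_succ']; rfl
    rw [this]
    exact EqvGen.trans _ _ _ ih (EqvGen.rel _ _ rfl)

lemma cyc_one [Finite α] : cyc (1 : Equiv.Perm α) = Nat.card α :=
  nclass_eq_card (fun x y h => h)

/-- the equivalence closures of `swap a b * ρ` and of `ρ`, with the edge `(a,b)` added,
agree -/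
lemma eqvGen_redge_swap (ρ : Equiv.Perm α) (a b : α) (x y : α) :
    EqvGen (redge (pstep (Equiv.swap a b * ρ)) a b) x y ↔
    EqvGen (redge (pstep ρ) a b) x y := by
  have hab : ∀ (r : α → α → Prop), EqvGen (redge r a b) a b :=
    fun r => EqvGen.rel _ _ (Or.inr ⟨rfl, rfl⟩)
  constructor
  · refine eqvGen_mono' (fun u v huv => ?_) x y
    rcases huv with huv | ⟨rfl, rfl⟩
    · have hv : Equiv.swap a b (ρ u) = v := huv
      have h1 : EqvGen (redge (pstep ρ) a b) u (ρ u) := EqvGen.rel _ _ (Or.inl rfl)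
      by_cases hρa : ρ u = a
      · have hvb : v = b := by rw [← hv, hρa, Equiv.swap_apply_left]
        rw [hvb]
        have h1' : EqvGen (redge (pstep ρ) a b) u a := hρa ▸ h1
        exact EqvGen.trans _ _ _ h1' (hab _)
      · by_cases hρb : ρ u = b
        · have hva : v = a := by rw [← hv, hρb, Equiv.swap_apply_right]
          rw [hva]
          have h1' : EqvGen (redge (pstep ρ) a b) u b := hρb ▸ h1
          exact EqvGen.trans _ _ _ h1' (EqvGen.symm _ _ (hab _))
        · have hvv : v = ρ u := by rw [← hv, Equiv.swap_apply_of_ne_of_ne hρa hρb]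
          rw [hvv]; exact h1
    · exact hab _
  · refine eqvGen_mono' (fun u v huv => ?_) x y
    rcases huv with huv | ⟨rfl, rfl⟩
    · subst huv
      have h1 : EqvGen (redge (pstep (Equiv.swap a b * ρ)) a b) u (Equiv.swap a b (ρ u)) :=
        EqvGen.rel _ _ (Or.inl rfl)
      by_cases hρa : ρ u = a
      · rw [hρa] at h1 ⊢
        rw [Equiv.swap_apply_left] at h1
        exact EqvGen.trans _ _ _ h1 (EqvGen.symm _ _ (hab _))
      · by_cases hρb : ρ u = b
        · rw [hρb] at h1 ⊢
          rw [Equiv.swap_apply_right] at h1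
          exact EqvGen.trans _ _ _ h1 (hab _)
        · rwa [Equiv.swap_apply_of_ne_of_ne hρa hρb] at h1
    · exact hab _

lemma nclass_redge_swap [Finite α] (ρ : Equiv.Perm α) (a b : α) :
    nclass (redge (pstep (Equiv.swap a b * ρ)) a b) = nclass (redge (pstep ρ) a b) := by
  have h1 := nclass_le (r := redge (pstep (Equiv.swap a b * ρ)) a b)
    (p := redge (pstep ρ) a b)
    (fun x y h => (eqvGen_redge_swap ρ a b x y).mp (EqvGen.rel _ _ h))
  have h2 := nclass_le (r := redge (pstep ρ) a b)
    (p := redge (pstep (Equiv.swap a b * ρ)) a b)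
    (fun x y h => (eqvGen_redge_swap ρ a b x y).mpr (EqvGen.rel _ _ h))
  omega

lemma cyc_swap_mul_le [Finite α] (ρ : Equiv.Perm α) (a b : α) :
    cyc (Equiv.swap a b * ρ) ≤ cyc ρ + 1 := by
  have h1 : cyc (Equiv.swap a b * ρ) ≤ nclass (redge (pstep (Equiv.swap a b * ρ)) a b) + 1 :=
    nclass_le_redge_add_one _ a b
  have h2 : nclass (redge (pstep ρ) a b) ≤ cyc ρ :=
    nclass_le (fun x y h => EqvGen.rel _ _ (Or.inl h))
  rw [nclass_redge_swap] at h1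
  omega

/-- merging fact: if `a,b` are in different orbits of `ρ`, then they are in the same
orbit of `swap a b * ρ`. -/
lemma eqvGen_swap_mul_of_not (ρ : Equiv.Perm α) {a b : α}
    (hne : a ≠ b) (h : ¬ EqvGen (pstep ρ) a b) (M : ℕ) (hM : 0 < M) (hMe : (ρ ^ M) b = b) :
    EqvGen (pstep (Equiv.swap a b * ρ)) a b := by
  -- least positive m with ρ^m b = b
  have hex : ∃ m, 0 < m ∧ (ρ ^ m) b = b := ⟨M, hM, hMe⟩
  classical
  set m := Nat.find hex with hm
  obtain ⟨hmpos, hmfix⟩ : 0 < m ∧ (ρ ^ m) b = b := Nat.find_spec hex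
  have hmin : ∀ k, 0 < k → k < m → (ρ ^ k) b ≠ b := by
    intro k hk hkm hfix
    exact Nat.find_min hex hkm ⟨hk, hfix⟩
  have hnota : ∀ k : ℕ, (ρ ^ k) b ≠ a := by
    intro k hfix
    exact h (EqvGen.symm _ _ (hfix ▸ eqvGen_pstep_pow ρ k b))
  set π := Equiv.swap a b * ρ with hπ
  have hswap : ∀ k : ℕ, π ((ρ ^ k) b) = Equiv.swap a b ((ρ ^ (k+1)) b) := by
    intro k
    have hc : (ρ ^ (k+1)) b = ρ ((ρ ^ k) b) := by rw [pow_succ']; rfl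
    rw [hπ, hc]; rfl
  have hstep : ∀ k, k + 1 < m → π ((ρ ^ k) b) = (ρ ^ (k+1)) b := by
    intro k hk
    rw [hswap k, Equiv.swap_apply_of_ne_of_ne (hnota (k+1))
      (hmin (k+1) (Nat.succ_pos k) hk)]
  have hiter : ∀ k, k < m → (π ^ k) b = (ρ ^ k) b := by
    intro k
    induction k with
    | zero => intro _; rfl
    | succ k ih =>
      intro hk
      have hk' : k < m := Nat.lt_of_succ_lt hk
      have : (π ^ (k+1)) b = π ((π ^ k) b) := by rw [pow_succ']; rfl
      rw [this, ih hk', hstep k hk]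
  -- now π^m b = a
  have hlast : (π ^ m) b = a := by
    obtain ⟨m', hm'⟩ : ∃ m', m = m' + 1 := ⟨m - 1, by omega⟩
    have h1 : (π ^ m) b = π ((π ^ m') b) := by rw [hm', pow_succ']; rfl
    rw [h1, hiter m' (by omega)]
    rw [hswap m', ← hm', hmfix, Equiv.swap_apply_right]
  exact EqvGen.symm _ _ (hlast ▸ eqvGen_pstep_pow π m b)

lemma cyc_swap_mul_lt [Finite α] (ρ : Equiv.Perm α) {a b : α}
    (hne : a ≠ b) (h : ¬ EqvGen (pstep ρ) a b) :
    cyc (Equiv.swap a b * ρ) + 1 ≤ cyc ρ := by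
  have hab : EqvGen (pstep (Equiv.swap a b * ρ)) a b := by
    refine eqvGen_swap_mul_of_not ρ hne h (orderOf ρ) ?_ ?_
    · haveI : Fintype (Equiv.Perm α) := by
        haveI := Fintype.ofFinite α
        haveI := Classical.decEq α
        exact inferInstance
      exact orderOf_pos ρ
    · rw [pow_orderOf_eq_one]; rfl
  have h1 : cyc (Equiv.swap a b * ρ) = nclass (redge (pstep (Equiv.swap a b * ρ)) a b) :=
    (nclass_redge_eq hab).symm
  have h2 : nclass (redge (pstep ρ) a b) + 1 ≤ cyc ρ := nclass_redge_add_one_le h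
  rw [h1, nclass_redge_swap]
  omega

/-- splitting fact: composing with the swap `(a, π a)` splits the orbit of `a`. -/
lemma cyc_swap_split [Finite α] (π : Equiv.Perm α) {a : α} (ha : π a ≠ a) :
    cyc (Equiv.swap a (π a) * π) = cyc π + 1 := by
  set b := π a with hb
  set π' := Equiv.swap a b * π with hπ'
  have hfix : π' a = a := by rw [hπ']; simp [Equiv.Perm.mul_apply, ← hb]
  -- the orbit of a under π' is a singleton
  have hsingle : ∀ y, EqvGen (pstep π') a y → y = a := by
    intro y hy
    have key : ∀ u v, EqvGen (pstep π') u v → ((u = a → v = a) ∧ (v = a → u = a)) := by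
      intro u v huv
      induction huv with
      | rel u v huv =>
        constructor
        · intro h; rw [h] at huv; rw [← huv, hfix]
        · intro h; rw [h] at huv; have := π'.injective (huv.trans hfix.symm); exact this
      | refl u => exact ⟨id, id⟩
      | symm u v _ ih => exact ⟨ih.2, ih.1⟩
      | trans u v w _ _ ih1 ih2 => exact ⟨fun h => ih2.1 (ih1.1 h), fun h => ih1.2 (ih2.2 h)⟩
    exact (key a y hy).1 rfl
  have hnab : ¬ EqvGen (pstep π') a b := by
    intro hh
    exact ha (hsingle b hh)
  have e1 : nclass (redge (pstep π') a b) + 1 ≤ cyc π' := nclass_redge_add_one_le hnab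
  have e2 : cyc π' ≤ nclass (redge (pstep π') a b) + 1 := nclass_le_redge_add_one _ a b
  have e3 : nclass (redge (pstep π') a b) = nclass (redge (pstep π) a b) :=
    nclass_redge_swap π a b
  have e4 : nclass (redge (pstep π) a b) = cyc π :=
    nclass_redge_eq (EqvGen.rel _ _ rfl)
  omega

end PermCount
section SwapList

open Equiv Relation

variable {α : Type} [DecidableEq α]

/-- the symmetrized relation generated by a list of pairs ("edges") -/
def relList (l : List (α × α)) : α → α → Prop :=
  fun x y => (x, y) ∈ l ∨ (y, x) ∈ l

omit [DecidableEq α] in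
lemma eqvGen_relList_cons (a b : α) (l : List (α × α)) (x y : α) :
    EqvGen (relList ((a,b) :: l)) x y ↔ EqvGen (redge (relList l) a b) x y := by
  constructor
  · refine eqvGen_mono' (fun u v huv => ?_) x y
    rcases huv with huv | huv
    · rcases List.mem_cons.mp huv with h | h
      · obtain ⟨rfl, rfl⟩ : u = a ∧ v = b := Prod.ext_iff.mp h
        exact EqvGen.rel _ _ (Or.inr ⟨rfl, rfl⟩)
      · exact EqvGen.rel _ _ (Or.inl (Or.inl h))
    · rcases List.mem_cons.mp huv with h | h
      · obtain ⟨rfl, rfl⟩ : v = a ∧ u = b := Prod.ext_iff.mp h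
        exact EqvGen.symm _ _ (EqvGen.rel _ _ (Or.inr ⟨rfl, rfl⟩))
      · exact EqvGen.rel _ _ (Or.inl (Or.inr h))
  · refine eqvGen_mono' (fun u v huv => ?_) x y
    rcases huv with huv | ⟨rfl, rfl⟩
    · rcases huv with h | h
      · exact EqvGen.rel _ _ (Or.inl (List.mem_cons_of_mem _ h))
      · exact EqvGen.rel _ _ (Or.inr (List.mem_cons_of_mem _ h))
    · exact EqvGen.rel _ _ (Or.inl (List.mem_cons_self))

omit [DecidableEq α] in
lemma eqvGen_redge_congr {r₁ r₂ : α → α → Prop} (h : ∀ x y, EqvGen r₁ x y ↔ EqvGen r₂ x y)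
    (a b : α) (x y : α) :
    EqvGen (redge r₁ a b) x y ↔ EqvGen (redge r₂ a b) x y := by
  constructor
  · refine eqvGen_mono' (fun u v huv => ?_) x y
    rcases huv with huv | ⟨rfl, rfl⟩
    · exact Relation.EqvGen.mono (fun p q hpq => Or.inl hpq) _ _ ((h u v).mp (EqvGen.rel _ _ huv))
    · exact EqvGen.rel _ _ (Or.inr ⟨rfl, rfl⟩)
  · refine eqvGen_mono' (fun u v huv => ?_) x y
    rcases huv with huv | ⟨rfl, rfl⟩
    · exact Relation.EqvGen.mono (fun p q hpq => Or.inl hpq) _ _ ((h u v).mpr (EqvGen.rel _ _ huv))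
    · exact EqvGen.rel _ _ (Or.inr ⟨rfl, rfl⟩)

omit [DecidableEq α] in
lemma eqvGen_redge_self {r : α → α → Prop} {a b : α} (h : EqvGen r a b) (x y : α) :
    EqvGen (redge r a b) x y ↔ EqvGen r x y := by
  constructor
  · refine eqvGen_mono' (fun u v huv => ?_) x y
    rcases huv with huv | ⟨rfl, rfl⟩
    · exact EqvGen.rel _ _ huv
    · exact h
  · exact fun hh => Relation.EqvGen.mono (fun p q hpq => Or.inl hpq) _ _ hh

omit [DecidableEq α] in
lemma nclass_congr {r₁ r₂ : α → α → Prop} [Finite α]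
    (h : ∀ x y, EqvGen r₁ x y ↔ EqvGen r₂ x y) : nclass r₁ = nclass r₂ :=
  Nat.le_antisymm
    (nclass_le (fun x y hxy => (h x y).mpr (EqvGen.rel _ _ hxy)))
    (nclass_le (fun x y hxy => (h x y).mp (EqvGen.rel _ _ hxy)))

lemma eqvGen_relList_prod (l : List (α × α)) (x : α) :
    EqvGen (relList l) x (((l.map fun p => Equiv.swap p.1 p.2).prod) x) := by
  induction l generalizing x with
  | nil => exact EqvGen.refl x
  | cons p l ih =>
    obtain ⟨a, b⟩ := p
    set ρ := (l.map fun p => Equiv.swap p.1 p.2).prod with hρ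
    have hprod : (((a,b) :: l).map fun p => Equiv.swap p.1 p.2).prod = Equiv.swap a b * ρ := by
      simp [hρ]
    rw [hprod]
    have h1 : EqvGen (relList ((a,b) :: l)) x (ρ x) := by
      refine Relation.EqvGen.mono ?_ _ _ (ih x)
      intro p q hpq
      rcases hpq with h | h
      · exact Or.inl (List.mem_cons_of_mem _ h)
      · exact Or.inr (List.mem_cons_of_mem _ h)
    refine EqvGen.trans _ _ _ h1 ?_
    show EqvGen (relList ((a,b) :: l)) (ρ x) (Equiv.swap a b (ρ x))
    by_cases hρa : ρ x = a
    · rw [hρa, Equiv.swap_apply_left]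
      exact EqvGen.rel _ _ (Or.inl (List.mem_cons_self))
    · by_cases hρb : ρ x = b
      · rw [hρb, Equiv.swap_apply_right]
        exact EqvGen.rel _ _ (Or.inr (List.mem_cons_self))
      · rw [Equiv.swap_apply_of_ne_of_ne hρa hρb]
        exact EqvGen.refl _

/-- Euler-type inequality for words of transpositions -/
lemma cyc_prod_swap_le [Finite α] (l : List (α × α)) (hl : ∀ p ∈ l, p.1 ≠ p.2) :
    cyc ((l.map fun p => Equiv.swap p.1 p.2).prod) + Nat.card α ≤
      l.length + 2 * nclass (relList l) := by
  induction l with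
  | nil =>
    have h1 : cyc ((List.nil.map fun p : α × α => Equiv.swap p.1 p.2).prod) = Nat.card α := by
      simp only [List.map_nil, List.prod_nil]
      exact cyc_one
    have h2 : nclass (relList (α := α) []) = Nat.card α :=
      nclass_eq_card (fun x y hxy => by rcases hxy with h | h <;> simp at h)
    omega
  | cons p l ih =>
    obtain ⟨a, b⟩ := p
    have hne : a ≠ b := hl (a, b) (List.mem_cons_self)
    have ih' := ih (fun q hq => hl q (List.mem_cons_of_mem _ hq))
    set ρ := (l.map fun p => Equiv.swap p.1 p.2).prod with hρ
    have hprod : (((a,b) :: l).map fun p => Equiv.swap p.1 p.2).prod = Equiv.swap a b * ρ := by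
      simp [hρ]
    rw [hprod]
    have hcons : nclass (relList ((a,b) :: l)) = nclass (redge (relList l) a b) :=
      nclass_congr (eqvGen_relList_cons a b l)
    by_cases hEl : EqvGen (relList l) a b
    · have h1 : cyc (Equiv.swap a b * ρ) ≤ cyc ρ + 1 := cyc_swap_mul_le ρ a b
      have h2 : nclass (relList ((a,b) :: l)) = nclass (relList l) := by
        rw [hcons, nclass_redge_eq hEl]
      simp only [List.length_cons]
      omega
    · have hEρ : ¬ EqvGen (pstep ρ) a b := by
        intro hh
        exact hEl (eqvGen_mono' (fun x y hxy => hxy ▸ eqvGen_relList_prod l x) a b hh)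
      have h1 : cyc (Equiv.swap a b * ρ) + 1 ≤ cyc ρ := cyc_swap_mul_lt ρ hne hEρ
      have h2 : nclass (relList l) ≤ nclass (relList ((a,b) :: l)) + 1 := by
        rw [hcons]
        exact nclass_le_redge_add_one _ a b
      simp only [List.length_cons]
      omega

/-- every permutation of a finite type is a product of `|α| - cyc π` transpositions whose
graph spans the orbits of `π` -/
lemma exists_swap_list [Finite α] (π : Equiv.Perm α) :
    ∃ l : List (α × α), (∀ p ∈ l, p.1 ≠ p.2) ∧
      (l.map fun p => Equiv.swap p.1 p.2).prod = π ∧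
      l.length + cyc π = Nat.card α ∧
      (∀ x y, EqvGen (relList l) x y ↔ EqvGen (pstep π) x y) := by
  classical
  haveI := Fintype.ofFinite α
  generalize hn : π.support.card = n
  induction n using Nat.strong_induction_on generalizing π with
  | _ n ih =>
    by_cases hπ : π = 1
    · subst hπ
      refine ⟨[], by simp, by simp, ?_, ?_⟩
      · have : cyc (1 : Equiv.Perm α) = Nat.card α := cyc_one
        simp [this]
      · intro x y
        constructor
        · intro hh
          have : x = y := eqvGen_eq_of_subsingleton
            (fun u v huv => by rcases huv with h | h <;> simp at h) hh
          exact this ▸ EqvGen.refl x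
        · intro hh
          have : x = y := eqvGen_eq_of_subsingleton (fun u v huv => huv.symm ▸ rfl) hh
          exact this ▸ EqvGen.refl x
    · obtain ⟨a, ha⟩ : ∃ a, π a ≠ a := by
        by_contra hcon
        push_neg at hcon
        exact hπ (Equiv.ext hcon)
      set π' := Equiv.swap a (π a) * π with hπ'
      have hlt : π'.support.card < n := by
        rw [← hn]
        exact Equiv.Perm.card_support_swap_mul ha
      obtain ⟨l', h1, h2, h3, h4⟩ := ih π'.support.card hlt π' rfl
      refine ⟨(a, π a) :: l', ?_, ?_, ?_, ?_⟩
      · intro p hp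
        rcases List.mem_cons.mp hp with h | h
        · rw [h]; exact fun hc => ha hc.symm
        · exact h1 p h
      · rw [List.map_cons, List.prod_cons, h2, hπ', ← mul_assoc, Equiv.swap_mul_self, one_mul]
      · have hsplit : cyc π' = cyc π + 1 := cyc_swap_split π ha
        simp only [List.length_cons]
        omega
      · intro x y
        rw [eqvGen_relList_cons, eqvGen_redge_congr h4 a (π a) x y]
        have hs : EqvGen (redge (pstep π') a (π a)) x y ↔
            EqvGen (redge (pstep π) a (π a)) x y := by
          have := eqvGen_redge_swap π' a (π a) x y
          have hππ : Equiv.swap a (π a) * π' = π := by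
            rw [hπ', ← mul_assoc, Equiv.swap_mul_self, one_mul]
          rw [hππ] at this
          exact this.symm
        rw [hs]
        exact eqvGen_redge_self (r := pstep π) (EqvGen.rel _ _ rfl) x y

end SwapList
namespace CGraph

section TwoInvol

open Equiv Relation

variable {C V : Type} [Finite V]

/-- the color involutions as permutations -/
def sperm (G : CGraph C V) (c : C) : Equiv.Perm V :=
  ⟨G.inv c, G.inv c, G.invol c, G.invol c⟩

lemma sperm_apply (G : CGraph C V) (c : C) (v : V) : G.sperm c v = G.inv c v := rfl

lemma sperm_sq (G : CGraph C V) (c : C) : G.sperm c * G.sperm c = 1 := by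
  ext v
  simp [sperm_apply, Equiv.Perm.mul_apply, G.invol]

lemma sperm_inv (G : CGraph C V) (c : C) : (G.sperm c)⁻¹ = G.sperm c :=
  inv_eq_of_mul_eq_one_right (G.sperm_sq c)

lemma sperm_sperm (G : CGraph C V) (c : C) (v : V) : G.sperm c (G.sperm c v) = v :=
  G.invol c v

lemma sperm_no_fixed (G : CGraph C V) (c : C) (v : V) : G.sperm c v ≠ v :=
  G.no_fixed c v

variable (G : CGraph C V) (r s : C)

local notation "T" => G.sperm r * G.sperm s

lemma T_inv : (G.sperm r * G.sperm s)⁻¹ = G.sperm s * G.sperm r := by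
  rw [mul_inv_rev, sperm_inv, sperm_inv]

lemma sr_T : G.sperm r * (G.sperm r * G.sperm s) = G.sperm s := by
  rw [← mul_assoc, sperm_sq, one_mul]

lemma sr_mul_T : G.sperm r * (G.sperm r * G.sperm s) = (G.sperm r * G.sperm s)⁻¹ * G.sperm r := by
  rw [sr_T, T_inv, mul_assoc, sperm_sq, mul_one]

lemma ss_mul_T : G.sperm s * (G.sperm r * G.sperm s) = (G.sperm r * G.sperm s)⁻¹ * G.sperm s := by
  rw [T_inv, mul_assoc]

lemma sr_mul_T_pow (j : ℕ) :
    G.sperm r * (G.sperm r * G.sperm s) ^ j = ((G.sperm r * G.sperm s)⁻¹) ^ j * G.sperm r := by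
  induction j with
  | zero => simp
  | succ j ih =>
    rw [pow_succ, ← mul_assoc, ih, mul_assoc, sr_mul_T, pow_succ, mul_assoc]

lemma ss_mul_T_pow (j : ℕ) :
    G.sperm s * (G.sperm r * G.sperm s) ^ j = ((G.sperm r * G.sperm s)⁻¹) ^ j * G.sperm s := by
  induction j with
  | zero => simp
  | succ j ih =>
    rw [pow_succ, ← mul_assoc, ih, mul_assoc, ss_mul_T, pow_succ, mul_assoc]

/-- a point and its `r`-image are never in the same orbit of `sperm r * sperm s` -/
lemma T_pow_ne_sr : ∀ (k : ℕ) (v : V), ((G.sperm r * G.sperm s) ^ k) v ≠ G.sperm r v := by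
  intro k v hk
  rcases Nat.even_or_odd k with ⟨j, hj⟩ | ⟨j, hj⟩
  · -- k = 2j : sperm r fixes T^j v
    apply G.sperm_no_fixed r (((G.sperm r * G.sperm s) ^ j) v)
    have h1 : G.sperm r (((G.sperm r * G.sperm s) ^ j) v)
        = (((G.sperm r * G.sperm s)⁻¹) ^ j) (G.sperm r v) := by
      rw [← Equiv.Perm.mul_apply, sr_mul_T_pow, Equiv.Perm.mul_apply]
    rw [h1, ← hk]
    have h2 : (((G.sperm r * G.sperm s)⁻¹) ^ j) (((G.sperm r * G.sperm s) ^ k) v)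
        = ((G.sperm r * G.sperm s) ^ j) v := by
      rw [← Equiv.Perm.mul_apply, inv_pow]
      have : ((G.sperm r * G.sperm s) ^ j)⁻¹ * (G.sperm r * G.sperm s) ^ k
          = (G.sperm r * G.sperm s) ^ j := by
        rw [hj, pow_add, inv_mul_cancel_left]
      rw [this]
    rw [h2]
  · -- k = 2j+1 : sperm s fixes T^j v
    apply G.sperm_no_fixed s (((G.sperm r * G.sperm s) ^ j) v)
    have hssv : G.sperm s v = ((G.sperm r * G.sperm s) ^ (2*j)) v := by
      -- ss v = T⁻¹ (sr v) = T⁻¹ T^k v = T^(k-1) v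
      have h0 : G.sperm s v = ((G.sperm r * G.sperm s)⁻¹) (G.sperm r v) := by
        rw [T_inv, Equiv.Perm.mul_apply]
        show G.sperm s v = G.sperm s (G.sperm r (G.sperm r v))
        rw [← Equiv.Perm.mul_apply (G.sperm r) (G.sperm r), sperm_sq]
        rfl
      rw [h0, ← hk, ← Equiv.Perm.mul_apply]
      congr 1
      rw [hj]
      have : (G.sperm r * G.sperm s) ^ (2*j+1) = (G.sperm r * G.sperm s) * (G.sperm r * G.sperm s) ^ (2*j) := by
        rw [pow_succ']
      rw [this, inv_mul_cancel_left]
    have h1 : G.sperm s (((G.sperm r * G.sperm s) ^ j) v)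
        = (((G.sperm r * G.sperm s)⁻¹) ^ j) (G.sperm s v) := by
      rw [← Equiv.Perm.mul_apply, ss_mul_T_pow, Equiv.Perm.mul_apply]
    rw [h1, hssv, ← Equiv.Perm.mul_apply, inv_pow]
    have : ((G.sperm r * G.sperm s) ^ j)⁻¹ * (G.sperm r * G.sperm s) ^ (2*j)
        = (G.sperm r * G.sperm s) ^ j := by
      rw [two_mul, pow_add, inv_mul_cancel_left]
    rw [this]

end TwoInvol

end CGraph
namespace CGraph

section TwoInvolCount

open Equiv Relation

variable {C V : Type} [Finite V] (G : CGraph C V) (r s : C)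

/-- orbit relation of `T = sperm r * sperm s` is contained in the `{r,s}`-component relation -/
lemma eqvGen_T_le (x y : V) (h : EqvGen (pstep (G.sperm r * G.sperm s)) x y) :
    EqvGen (fun v w => ∃ c ∈ ({r, s} : Set C), G.inv c v = w) x y := by
  refine eqvGen_mono' (fun u v huv => ?_) x y h
  have h1 : EqvGen (fun v w => ∃ c ∈ ({r, s} : Set C), G.inv c v = w) u (G.sperm s u) :=
    EqvGen.rel _ _ ⟨s, Or.inr rfl, rfl⟩
  have h2 : EqvGen (fun v w => ∃ c ∈ ({r, s} : Set C), G.inv c v = w)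
      (G.sperm s u) (G.sperm r (G.sperm s u)) :=
    EqvGen.rel _ _ ⟨r, Or.inl rfl, rfl⟩
  have : v = G.sperm r (G.sperm s u) := huv.symm
  rw [this]
  exact EqvGen.trans _ _ _ h1 h2

/-- conjugation by `sperm r` preserves `T`-orbits -/
lemma eqvGen_T_conj {x y : V} (h : EqvGen (pstep (G.sperm r * G.sperm s)) x y) :
    EqvGen (pstep (G.sperm r * G.sperm s)) (G.sperm r x) (G.sperm r y) := by
  induction h with
  | rel u v huv =>
    have hv : v = (G.sperm r * G.sperm s) u := huv.symm
    rw [hv]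
    have h1 : G.sperm r ((G.sperm r * G.sperm s) u)
        = ((G.sperm r * G.sperm s)⁻¹) (G.sperm r u) := by
      rw [← Equiv.Perm.mul_apply, ← Equiv.Perm.mul_apply]
      have := sr_mul_T_pow G r s 1
      rw [pow_one, pow_one] at this
      rw [this]
    rw [h1]
    refine EqvGen.symm _ _ (EqvGen.rel _ _ ?_)
    show (G.sperm r * G.sperm s) (((G.sperm r * G.sperm s)⁻¹) (G.sperm r u)) = G.sperm r u
    simp
  | refl u => exact EqvGen.refl _
  | symm u v _ ih => exact EqvGen.symm _ _ ih
  | trans u v w _ _ ih1 ih2 => exact EqvGen.trans _ _ _ ih1 ih2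

/-- classification: each `{r,s}`-component consists of (at most) the `T`-orbits of `v`
and `sperm r v` -/
lemma eqvGen_rs_cases {x y : V}
    (h : EqvGen (fun v w => ∃ c ∈ ({r, s} : Set C), G.inv c v = w) x y) :
    EqvGen (pstep (G.sperm r * G.sperm s)) x y ∨
      EqvGen (pstep (G.sperm r * G.sperm s)) x (G.sperm r y) := by
  induction h with
  | rel u v huv =>
    obtain ⟨c, hc, hcv⟩ := huv
    rcases hc with hc | hc
    · -- c = r
      right
      have hv : G.sperm r v = u := by
        rw [← hcv, hc]
        exact G.invol r u
      rw [hv]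
      exact EqvGen.refl u
    · -- c = s
      right
      have hv : G.sperm r v = (G.sperm r * G.sperm s) u := by
        rw [← hcv]
        have : c = s := hc
        rw [this]
        rfl
      rw [hv]
      exact EqvGen.rel _ _ rfl
  | refl u => exact Or.inl (EqvGen.refl u)
  | symm u v _ ih =>
    rcases ih with ih | ih
    · exact Or.inl (EqvGen.symm _ _ ih)
    · right
      have := eqvGen_T_conj G r s ih
      rw [sperm_sperm] at this
      exact EqvGen.symm _ _ this
  | trans u v w _ _ ih1 ih2 =>
    rcases ih1 with ih1 | ih1 <;> rcases ih2 with ih2 | ih2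
    · exact Or.inl (EqvGen.trans _ _ _ ih1 ih2)
    · exact Or.inr (EqvGen.trans _ _ _ ih1 ih2)
    · right
      exact EqvGen.trans _ _ _ ih1 (eqvGen_T_conj G r s ih2)
    · left
      have := eqvGen_T_conj G r s ih2
      rw [sperm_sperm] at this
      exact EqvGen.trans _ _ _ ih1 this

/-- disjointness: `v` and `sperm r v` are in different `T`-orbits -/
lemma eqvGen_T_disjoint (v : V) :
    ¬ EqvGen (pstep (G.sperm r * G.sperm s)) v (G.sperm r v) := by
  intro h
  -- convert to powers
  have hpow : ∀ {x y : V}, EqvGen (pstep (G.sperm r * G.sperm s)) x y →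
      ∃ k : ℕ, ((G.sperm r * G.sperm s) ^ k) x = y ∨ ((G.sperm r * G.sperm s) ^ k) y = x := by
    intro x y hxy
    induction hxy with
    | rel u v huv => exact ⟨1, Or.inl (by rw [pow_one]; exact huv)⟩
    | refl u => exact ⟨0, Or.inl rfl⟩
    | symm u v _ ih =>
      obtain ⟨k, hk | hk⟩ := ih
      · exact ⟨k, Or.inr hk⟩
      · exact ⟨k, Or.inl hk⟩
    | trans u v w _ _ ih1 ih2 =>
      set t := G.sperm r * G.sperm s
      obtain ⟨j, hj | hj⟩ := ih1 <;> obtain ⟨k, hk | hk⟩ := ih2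
      · exact ⟨k + j, Or.inl (by rw [pow_add, Equiv.Perm.mul_apply, hj, hk])⟩
      · rcases le_or_gt k j with hle | hlt
        · refine ⟨j - k, Or.inl ?_⟩
          have : (t ^ k) ((t ^ (j-k)) u) = (t ^ k) w := by
            rw [← Equiv.Perm.mul_apply, ← pow_add, Nat.add_sub_cancel' hle, hj, hk]
          exact (t ^ k).injective this
        · refine ⟨k - j, Or.inr ?_⟩
          have : (t ^ j) ((t ^ (k-j)) w) = (t ^ j) u := by
            rw [← Equiv.Perm.mul_apply, ← pow_add, Nat.add_sub_cancel' hlt.le, hk, hj]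
          exact (t ^ j).injective this
      · rcases le_or_gt j k with hle | hlt
        · refine ⟨k - j, Or.inl ?_⟩
          rw [← hj, ← Equiv.Perm.mul_apply, ← pow_add, Nat.sub_add_cancel hle, hk]
        · refine ⟨j - k, Or.inr ?_⟩
          rw [← hk, ← Equiv.Perm.mul_apply, ← pow_add, Nat.sub_add_cancel hlt.le, hj]
      · exact ⟨j + k, Or.inr (by rw [pow_add, Equiv.Perm.mul_apply, hk, hj])⟩
  obtain ⟨k, hk | hk⟩ := hpow h
  · exact T_pow_ne_sr G r s k v hk
  · -- T^k (sr v) = v = sr (sr v)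
    apply T_pow_ne_sr G r s k (G.sperm r v)
    rw [hk]
    exact (sperm_sperm G r v).symm

/-- the number of orbits of the product of the two involutions is twice the number of
`{r,s}`-components -/
lemma cyc_two_invol : cyc (G.sperm r * G.sperm s) = 2 * G.g {r, s} := by
  classical
  set Rg := fun v w : V => ∃ c ∈ ({r, s} : Set C), G.inv c v = w with hRg
  set sT : Setoid V := Relation.EqvGen.setoid (pstep (G.sperm r * G.sperm s)) with hsT
  set sG : Setoid V := Relation.EqvGen.setoid Rg with hsG
  have hle : ∀ x y, EqvGen (pstep (G.sperm r * G.sperm s)) x y → EqvGen Rg x y :=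
    fun x y h => eqvGen_T_le G r s x y h
  let φ : Quotient sT → Quotient sG := Quotient.map' id (fun x y h => hle x y h)
  haveI : Fintype (Quotient sT) := Fintype.ofFinite _
  haveI : Fintype (Quotient sG) := Fintype.ofFinite _
  have hfib : ∀ y : Quotient sG, Nat.card {x : Quotient sT // φ x = y} = 2 := by
    intro y
    obtain ⟨v, rfl⟩ := Quotient.exists_rep y
    have hmem1 : φ (Quotient.mk sT v) = Quotient.mk sG v := rfl
    have hmem2 : φ (Quotient.mk sT (G.sperm r v)) = Quotient.mk sG v := by
      show Quotient.mk sG (G.sperm r v) = Quotient.mk sG v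
      refine Quotient.sound ?_
      exact EqvGen.symm _ _ (EqvGen.rel _ _ ⟨r, Or.inl rfl, rfl⟩)
    have hne : (Quotient.mk sT v : Quotient sT) ≠ Quotient.mk sT (G.sperm r v) := by
      intro hq
      exact eqvGen_T_disjoint G r s v (Quotient.exact hq)
    have hall : ∀ x : Quotient sT, φ x = Quotient.mk sG v →
        x = Quotient.mk sT v ∨ x = Quotient.mk sT (G.sperm r v) := by
      intro x hx
      obtain ⟨w, rfl⟩ := Quotient.exists_rep x
      have hwv : EqvGen Rg w v := Quotient.exact hx
      rcases eqvGen_rs_cases G r s hwv with h | h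
      · exact Or.inl (Quotient.sound h)
      · exact Or.inr (Quotient.sound h)
    have : Nat.card {x : Quotient sT // φ x = Quotient.mk sG v} = 2 := by
      have hbij : Function.Bijective (fun b : Bool =>
          (⟨if b then Quotient.mk sT v else Quotient.mk sT (G.sperm r v),
            by split <;> simp [hmem1, hmem2]⟩ :
            {x : Quotient sT // φ x = Quotient.mk sG v})) := by
        constructor
        · intro b1 b2 hb
          have hval := congrArg Subtype.val hb
          cases b1 <;> cases b2
          · rfl
          · exact absurd ((show Quotient.mk sT (G.sperm r v) = Quotient.mk sT v from hval).symm) hne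
          · exact absurd (show Quotient.mk sT v = Quotient.mk sT (G.sperm r v) from hval) hne
          · rfl
        · rintro ⟨x, hx⟩
          rcases hall x hx with h | h
          · exact ⟨true, by simp [h.symm]⟩
          · exact ⟨false, by simp [h.symm]⟩
      have := Nat.card_eq_of_bijective _ hbij
      rw [← this]
      simp
    exact this
  have hcard : Fintype.card (Quotient sT) = 2 * Fintype.card (Quotient sG) := by
    haveI : ∀ y : Quotient sG, Fintype {x : Quotient sT // φ x = y} :=
      fun y => Fintype.ofFinite _
    have h1 : Fintype.card (Quotient sT)
        = Fintype.card ((y : Quotient sG) × {x : Quotient sT // φ x = y}) :=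
      Fintype.card_congr (Equiv.sigmaFiberEquiv φ).symm
    rw [h1, Fintype.card_sigma]
    have h2 : ∀ y : Quotient sG, Fintype.card {x : Quotient sT // φ x = y} = 2 := by
      intro y
      rw [← Nat.card_eq_fintype_card]
      exact hfib y
    rw [Finset.sum_congr rfl (fun y _ => h2 y)]
    simp [Finset.sum_const, Finset.card_univ, mul_comm]
  show nclass (pstep (G.sperm r * G.sperm s)) = 2 * G.g {r, s}
  have e1 : nclass (pstep (G.sperm r * G.sperm s)) = Fintype.card (Quotient sT) :=
    Nat.card_eq_fintype_card
  have e2 : G.g {r, s} = Fintype.card (Quotient sG) := Nat.card_eq_fintype_card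
  rw [e1, e2, hcard]

end TwoInvolCount

end CGraph
namespace CGraph

section PerSigma

open Equiv Relation

variable {C V : Type} [Finite V] [Fintype C] [DecidableEq C]

lemma cyclic_orderOf {σ : Equiv.Perm C} (hσ : IsCyclicPerm σ) :
    orderOf σ = Fintype.card C := by
  rw [hσ.1.orderOf]
  congr 1
  rw [Finset.eq_univ_iff_forall]
  intro c
  rw [Equiv.Perm.mem_support]
  exact hσ.2 c

lemma cyclic_pow_card {σ : Equiv.Perm C} (hσ : IsCyclicPerm σ) :
    σ ^ (Fintype.card C) = 1 := by
  rw [← cyclic_orderOf hσ]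
  exact pow_orderOf_eq_one σ

lemma cyclic_orbit_inj {σ : Equiv.Perm C} (hσ : IsCyclicPerm σ) (c : C) :
    ∀ {a b : ℕ}, a < Fintype.card C → b < Fintype.card C → (σ^a) c = (σ^b) c → a = b := by
  have key : ∀ {a b : ℕ}, a ≤ b → b < Fintype.card C → (σ^a) c = (σ^b) c → a = b := by
    intro a b hab hb h
    have h1 : (σ ^ a) ((σ ^ (b - a)) c) = (σ ^ a) c := by
      rw [← Equiv.Perm.mul_apply, ← pow_add, Nat.add_sub_cancel' hab, ← h]
    have h2 : (σ ^ (b - a)) c = c := (σ ^ a).injective h1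
    have h3 : σ ^ (b - a) = 1 := by
      rw [hσ.1.pow_eq_one_iff]
      exact ⟨c, hσ.2 c, h2⟩
    have h4 : orderOf σ ∣ b - a := orderOf_dvd_of_pow_eq_one h3
    rw [cyclic_orderOf hσ] at h4
    have : b - a < Fintype.card C := by omega
    have := Nat.eq_zero_of_dvd_of_lt h4 this
    omega
  · intro a b ha hb h
    rcases le_total a b with hab | hab
    · exact key hab hb h
    · exact (key hab ha h.symm).symm

lemma cyclic_orbit_surj {σ : Equiv.Perm C} (hσ : IsCyclicPerm σ) (c : C) (c' : C) :
    ∃ j, j < Fintype.card C ∧ (σ^j) c = c' := by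
  have hsc : σ.SameCycle c c' := hσ.1.sameCycle (hσ.2 c) (hσ.2 c')
  obtain ⟨i, _, _, hi⟩ := Equiv.Perm.SameCycle.exists_pow_eq σ hsc
  refine ⟨i % Fintype.card C, Nat.mod_lt _ ?_, ?_⟩
  · rw [← cyclic_orderOf hσ]; exact orderOf_pos σ
  · rw [← Nat.div_add_mod i (Fintype.card C), pow_add, pow_mul, cyclic_pow_card hσ,
      one_pow, one_mul] at hi
    exact hi

variable (G : CGraph C V)

/-- the "even subgroup" reachability relation -/
def reven (G : CGraph C V) : V → V → Prop :=
  Relation.EqvGen (fun x y => ∃ a b : C, (G.sperm a * G.sperm b) x = y)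

omit [Fintype C] [DecidableEq C] in
lemma reven_conj (c : C) {x y : V} (h : G.reven x y) :
    G.reven (G.sperm c x) (G.sperm c y) := by
  induction h with
  | rel u v huv =>
    obtain ⟨a, b, hab⟩ := huv
    have h1 : G.reven (G.sperm c u) ((G.sperm b * G.sperm c) (G.sperm c u)) :=
      EqvGen.rel _ _ ⟨b, c, rfl⟩
    have h2 : (G.sperm b * G.sperm c) (G.sperm c u) = G.sperm b u := by
      show G.sperm b (G.sperm c (G.sperm c u)) = G.sperm b u
      rw [sperm_sperm]
    rw [h2] at h1
    have h3 : G.reven (G.sperm b u) ((G.sperm c * G.sperm a) (G.sperm b u)) :=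
      EqvGen.rel _ _ ⟨c, a, rfl⟩
    have h4 : (G.sperm c * G.sperm a) (G.sperm b u) = G.sperm c v := by
      show G.sperm c (G.sperm a (G.sperm b u)) = G.sperm c v
      rw [← hab]
      rfl
    rw [h4] at h3
    exact EqvGen.trans _ _ _ h1 h3
  | refl u => exact EqvGen.refl _
  | symm u v _ ih => exact EqvGen.symm _ _ ih
  | trans u v w _ _ ih1 ih2 => exact EqvGen.trans _ _ _ ih1 ih2

omit [Fintype C] [DecidableEq C] in
/-- from full connectivity: everything is `reven`-related to `x` or to `sperm c₀ x` -/
lemma reven_cases (c₀ : C) {x y : V}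
    (h : EqvGen (fun v w => ∃ c ∈ (Set.univ : Set C), G.inv c v = w) x y) :
    G.reven x y ∨ G.reven x (G.sperm c₀ y) := by
  induction h with
  | rel u v huv =>
    obtain ⟨c, _, hc⟩ := huv
    right
    refine EqvGen.rel _ _ ⟨c₀, c, ?_⟩
    show G.sperm c₀ (G.sperm c u) = G.sperm c₀ v
    rw [show G.sperm c u = v from hc]
  | refl u => exact Or.inl (EqvGen.refl _)
  | symm u v _ ih =>
    rcases ih with ih | ih
    · exact Or.inl (EqvGen.symm _ _ ih)
    · right
      have := G.reven_conj c₀ ih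
      rw [sperm_sperm] at this
      exact EqvGen.symm _ _ this
  | trans u v w _ _ ih1 ih2 =>
    rcases ih1 with ih1 | ih1 <;> rcases ih2 with ih2 | ih2
    · exact Or.inl (EqvGen.trans _ _ _ ih1 ih2)
    · exact Or.inr (EqvGen.trans _ _ _ ih1 ih2)
    · right
      exact EqvGen.trans _ _ _ ih1 (G.reven_conj c₀ ih2)
    · left
      have := G.reven_conj c₀ ih2
      rw [sperm_sperm] at this
      exact EqvGen.trans _ _ _ ih1 this

/-- Key inequality: for any cyclic permutation `σ` of the colors of a connected graph,
`Σ_c g_{c, σ c} ≤ (n-2)·p + 2`; cleared of subtractions. -/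
lemma sum_g_cyclic_le (hconn : G.Conn) (σ : Equiv.Perm C) (hσ : IsCyclicPerm σ) :
    2 * Nat.card V + 2 * ∑ c : C, G.g {c, σ c} ≤
      Fintype.card C * Nat.card V + 4 := by
  classical
  haveI : DecidableEq V := Classical.decEq V
  set n := Fintype.card C with hn
  -- base color
  obtain ⟨c₀, hc₀, -⟩ := hσ.1
  set u : ℕ → C := fun j => (σ^j) c₀ with hu
  set t : ℕ → Equiv.Perm V := fun j => G.sperm (u j) * G.sperm (u (j+1)) with ht
  -- nonempty V
  have hVne : Nonempty V := by
    have h1 : Nat.card (Quotient (Relation.EqvGen.setoid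
        (fun v w : V => ∃ c ∈ (Set.univ : Set C), G.inv c v = w))) = 1 := hconn
    rw [Nat.card_eq_one_iff_unique] at h1
    obtain ⟨q⟩ := h1.2
    obtain ⟨v, -⟩ := Quotient.exists_rep q
    exact ⟨v⟩
  obtain ⟨x₀⟩ := hVne
  -- full connectivity pointwise
  have hfull : ∀ v w : V,
      EqvGen (fun v w : V => ∃ c ∈ (Set.univ : Set C), G.inv c v = w) v w := by
    intro v w
    set sfull := Relation.EqvGen.setoid
        (fun v w : V => ∃ c ∈ (Set.univ : Set C), G.inv c v = w) with hsfull
    have h1 : Nat.card (Quotient sfull) = 1 := hconn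
    rw [Nat.card_eq_one_iff_unique] at h1
    have h2 := @Subsingleton.elim _ h1.1 (Quotient.mk sfull v) (Quotient.mk sfull w)
    exact Quotient.exact h2
  -- build the big list
  have hlist : ∀ k : ℕ, ∃ l : List (V × V), (∀ p ∈ l, p.1 ≠ p.2) ∧
      (l.map fun p => Equiv.swap p.1 p.2).prod = G.sperm (u 0) * G.sperm (u k) ∧
      l.length + ∑ j ∈ Finset.range k, cyc (t j) = k * Nat.card V ∧
      (∀ j < k, ∀ x y, EqvGen (pstep (t j)) x y → EqvGen (relList l) x y) := by
    intro k
    induction k with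
    | zero =>
      refine ⟨[], by simp, ?_, by simp, by omega⟩
      simp only [List.map_nil, List.prod_nil]
      exact (sperm_sq G (u 0)).symm
    | succ k ih =>
      obtain ⟨l', hl1, hl2, hl3, hl4⟩ := ih
      obtain ⟨lj, hj1, hj2, hj3, hj4⟩ := exists_swap_list (t k)
      refine ⟨l' ++ lj, ?_, ?_, ?_, ?_⟩
      · intro p hp
        rcases List.mem_append.mp hp with h | h
        · exact hl1 p h
        · exact hj1 p h
      · rw [List.map_append, List.prod_append, hl2, hj2, ht]
        show G.sperm (u 0) * G.sperm (u k) * (G.sperm (u k) * G.sperm (u (k+1)))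
          = G.sperm (u 0) * G.sperm (u (k+1))
        rw [← mul_assoc, mul_assoc (G.sperm (u 0)), sperm_sq, mul_one]
      · rw [List.length_append, Finset.sum_range_succ, Nat.succ_mul]
        omega
      · intro j hj x y hxy
        have hmono : ∀ (l1 l2 : List (V × V)) (x y : V), EqvGen (relList l1) x y →
            EqvGen (relList (l1 ++ l2)) x y ∧ EqvGen (relList (l2 ++ l1)) x y := by
          intro l1 l2 x y h
          constructor <;>
          · refine Relation.EqvGen.mono (fun p q hpq => ?_) _ _ h
            rcases hpq with h | h
            · exact Or.inl (by simp [List.mem_append, h])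
            · exact Or.inr (by simp [List.mem_append, h])
        rcases Nat.lt_or_ge j k with hjk | hjk
        · exact (hmono l' lj x y (hl4 j hjk x y hxy)).1
        · have hjeq : j = k := by omega
          subst hjeq
          exact (hmono lj l' x y ((hj4 x y).mpr hxy)).2
  obtain ⟨l, hl1, hl2, hl3, hl4⟩ := hlist n
  -- at k = n the product is 1
  have hun : u n = u 0 := by
    show (σ ^ n) c₀ = (σ ^ 0) c₀
    rw [cyclic_pow_card hσ]
    rfl
  have hprod1 : (l.map fun p => Equiv.swap p.1 p.2).prod = 1 := by
    rw [hl2, hun]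
    exact sperm_sq G (u 0)
  -- reven steps are in relList l
  have hchain : ∀ j, j ≤ n → ∀ i ≤ j, ∀ x,
      EqvGen (relList l) x ((G.sperm (u i) * G.sperm (u j)) x) := by
    intro j
    induction j with
    | zero =>
      intro _ i hi x
      interval_cases i
      have : (G.sperm (u 0) * G.sperm (u 0)) x = x := by rw [sperm_sq]; rfl
      rw [this]
      exact EqvGen.refl x
    | succ j ihj =>
      intro hjn i hi x
      rcases Nat.lt_or_ge i (j+1) with hij | hij
      · have hij' : i ≤ j := by omega
        have h1 : EqvGen (relList l) x ((G.sperm (u j) * G.sperm (u (j+1))) x) :=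
          hl4 j (by omega) x _ (EqvGen.rel _ _ rfl)
        have h2 := ihj (by omega) i hij' ((G.sperm (u j) * G.sperm (u (j+1))) x)
        have h3 : (G.sperm (u i) * G.sperm (u j)) ((G.sperm (u j) * G.sperm (u (j+1))) x)
            = (G.sperm (u i) * G.sperm (u (j+1))) x := by
          show G.sperm (u i) (G.sperm (u j) (G.sperm (u j) (G.sperm (u (j+1)) x)))
            = G.sperm (u i) (G.sperm (u (j+1)) x)
          rw [sperm_sperm]
        rw [h3] at h2
        exact EqvGen.trans _ _ _ h1 h2
      · have hieq : i = j + 1 := by omega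
        rw [hieq]
        have : (G.sperm (u (j+1)) * G.sperm (u (j+1))) x = x := by rw [sperm_sq]; rfl
        rw [this]
        exact EqvGen.refl x
  have hstep : ∀ (a b : C) (x : V), EqvGen (relList l) x ((G.sperm a * G.sperm b) x) := by
    intro a b x
    obtain ⟨ia, hia, hua⟩ := cyclic_orbit_surj hσ c₀ a
    obtain ⟨ib, hib, hub⟩ := cyclic_orbit_surj hσ c₀ b
    have hua' : u ia = a := hua
    have hub' : u ib = b := hub
    rcases le_total ia ib with hab | hab
    · have := hchain ib (by omega) ia hab x
      rwa [hua', hub'] at this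
    · have h1 := hchain ia (by omega) ib hab ((G.sperm a * G.sperm b) x)
      rw [hua', hub'] at h1
      have h2 : (G.sperm b * G.sperm a) ((G.sperm a * G.sperm b) x) = x := by
        show G.sperm b (G.sperm a (G.sperm a (G.sperm b x))) = x
        rw [sperm_sperm, sperm_sperm]
      rw [h2] at h1
      exact EqvGen.symm _ _ h1
  -- reven has at most 2 classes, hence nclass (relList l) ≤ 2
  have hnc2 : nclass (relList l) ≤ 2 := by
    have hsurj : Function.Surjective (fun b : Bool =>
        if b then (Quotient.mk (Relation.EqvGen.setoid (relList l)) x₀)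
        else (Quotient.mk (Relation.EqvGen.setoid (relList l)) (G.sperm c₀ x₀))) := by
      intro q
      obtain ⟨w, rfl⟩ := Quotient.exists_rep q
      have hre : ∀ x y : V, G.reven x y → EqvGen (relList l) x y := by
        intro x y h
        refine eqvGen_mono' (fun p q hpq => ?_) x y h
        obtain ⟨a, b, hab⟩ := hpq
        exact hab ▸ hstep a b p
      rcases G.reven_cases c₀ (hfull x₀ w) with h | h
      · refine ⟨true, ?_⟩
        show Quotient.mk (Relation.EqvGen.setoid (relList l)) x₀
          = Quotient.mk (Relation.EqvGen.setoid (relList l)) w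
        exact Quotient.sound (hre _ _ h)
      · have h2 := G.reven_conj c₀ h
        rw [sperm_sperm] at h2
        refine ⟨false, ?_⟩
        show Quotient.mk (Relation.EqvGen.setoid (relList l)) (G.sperm c₀ x₀)
          = Quotient.mk (Relation.EqvGen.setoid (relList l)) w
        exact Quotient.sound (hre _ _ h2)
    have := Nat.card_le_card_of_surjective _ hsurj
    simpa [nclass] using this
  -- main count
  have hmain := cyc_prod_swap_le l hl1
  rw [hprod1, cyc_one] at hmain
  -- cyc (t j) = 2 * g
  have hcyc : ∀ j, cyc (t j) = 2 * G.g {u j, σ (u j)} := by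
    intro j
    have hne : u j ≠ u (j+1) := by
      intro h
      have : σ ((σ^j) c₀) = (σ^j) c₀ := by
        conv_lhs => rw [show σ ((σ^j) c₀) = (σ^(j+1)) c₀ from (by rw [pow_succ']; rfl)]
        exact h.symm
      exact hσ.2 _ this
    have hsucc : u (j+1) = σ (u j) := by
      show (σ^(j+1)) c₀ = σ ((σ^j) c₀)
      rw [pow_succ']
      rfl
    have := cyc_two_invol G (u j) (u (j+1))
    show cyc (G.sperm (u j) * G.sperm (u (j+1))) = 2 * G.g {u j, σ (u j)}
    rw [this, hsucc]
  -- reindex the sum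
  have hsum : ∑ j ∈ Finset.range n, G.g {u j, σ (u j)} = ∑ c : C, G.g {c, σ c} := by
    refine Finset.sum_bij (fun j _ => u j) ?_ ?_ ?_ ?_
    · intro j _; exact Finset.mem_univ _
    · intro j1 hj1 j2 hj2 h
      exact cyclic_orbit_inj hσ c₀ (Finset.mem_range.mp hj1) (Finset.mem_range.mp hj2) h
    · intro c _
      obtain ⟨j, hj, hje⟩ := cyclic_orbit_surj hσ c₀ c
      exact ⟨j, Finset.mem_range.mpr hj, hje⟩
    · intro j _; rfl
  have hsum2 : ∑ j ∈ Finset.range n, cyc (t j) = 2 * ∑ c : C, G.g {c, σ c} := by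
    rw [← hsum, Finset.mul_sum]
    exact Finset.sum_congr rfl (fun j _ => hcyc j)
  omega

end PerSigma

end CGraph
section Counting

open Equiv Relation CGraph

open Fin.NatCast in
lemma finRotate_pow_zero (m : ℕ) (j : ℕ) :
    ((finRotate (m+3))^j) 0 = ((j : ℕ) : Fin (m+3)) := by
  induction j with
  | zero => simp
  | succ j ih =>
    have : ((finRotate (m+3))^(j+1)) 0 = finRotate (m+3) (((finRotate (m+3))^j) 0) := by
      rw [pow_succ']; rfl
    rw [this, ih, finRotate_succ_apply]
    push_cast
    ring

lemma finRotate_no_fixed (m : ℕ) (i : Fin (m+3)) : finRotate (m+3) i ≠ i := by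
  rw [finRotate_succ_apply]
  intro h
  have h2 : i + 1 = i + 0 := by simpa using h
  have := add_left_cancel h2
  simp at this

open Fin.NatCast in
/-- the number of cyclic permutations with a prescribed transition `c ↦ s` -/
lemma card_cyclic_fiber (m : ℕ) (c s : Fin (m+3)) (hcs : c ≠ s) :
    Nat.card {σ : Equiv.Perm (Fin (m+3)) // IsCyclicPerm σ ∧ σ c = s}
      = (m+1).factorial := by
  classical
  -- an auxiliary permutation sending 0 to c and 1 to s
  have h01 : (0 : Fin (m+3)) ≠ 1 := by
    intro h
    have := congrArg Fin.val h
    simp [Fin.val_one] at this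
  obtain ⟨e₀, he0, he1⟩ : ∃ e₀ : Equiv.Perm (Fin (m+3)), e₀ 0 = c ∧ e₀ 1 = s := by
    have htne : Equiv.swap 0 c s ≠ 0 := by
      intro h
      have h2 : Equiv.swap 0 c s = Equiv.swap 0 c c :=
        h.trans (Equiv.swap_apply_right 0 c).symm
      exact hcs ((Equiv.swap 0 c).injective h2).symm
    refine ⟨Equiv.swap 0 c * Equiv.swap 1 (Equiv.swap 0 c s), ?_, ?_⟩
    · show Equiv.swap 0 c (Equiv.swap 1 (Equiv.swap 0 c s) 0) = c
      rw [Equiv.swap_apply_of_ne_of_ne h01 (Ne.symm htne), Equiv.swap_apply_left]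
    · show Equiv.swap 0 c (Equiv.swap 1 (Equiv.swap 0 c s) 1) = s
      rw [Equiv.swap_apply_left, Equiv.swap_apply_self]
  -- first: the count of permutations with e 0 = c, e 1 = s
  have hEcard : Nat.card {e : Equiv.Perm (Fin (m+3)) // e 0 = c ∧ e 1 = s}
      = (m+1).factorial := by
    have equiv1 : {e : Equiv.Perm (Fin (m+3)) // e 0 = c ∧ e 1 = s}
        ≃ {h : Equiv.Perm (Fin (m+3)) // h 0 = 0 ∧ h 1 = 1} := by
      refine ⟨fun e => ⟨e₀⁻¹ * e.1, ?_, ?_⟩, fun h => ⟨e₀ * h.1, ?_, ?_⟩, ?_, ?_⟩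
      · show e₀⁻¹ (e.1 0) = 0
        rw [e.2.1, ← he0, Equiv.Perm.inv_def, Equiv.symm_apply_apply]
      · show e₀⁻¹ (e.1 1) = 1
        rw [e.2.2, ← he1, Equiv.Perm.inv_def, Equiv.symm_apply_apply]
      · show e₀ (h.1 0) = c
        rw [h.2.1, he0]
      · show e₀ (h.1 1) = s
        rw [h.2.2, he1]
      · intro e
        apply Subtype.ext
        ext x
        simp
      · intro h
        apply Subtype.ext
        ext x
        simp
    have equiv2 : {h : Equiv.Perm (Fin (m+3)) // h 0 = 0 ∧ h 1 = 1}
        ≃ Equiv.Perm {x : Fin (m+3) // x ≠ 0 ∧ x ≠ 1} := by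
      refine Equiv.trans (Equiv.subtypeEquivRight ?_) 
        (Equiv.Perm.subtypeEquivSubtypePerm (fun x => x ≠ 0 ∧ x ≠ 1)).symm
      intro f
      constructor
      · rintro ⟨h0, h1⟩ a ha
        push_neg at ha
        by_cases ha0 : a = 0
        · rw [ha0, h0]
        · rw [ha ha0, h1]
      · intro hf
        exact ⟨hf 0 (fun hcon => hcon.1 rfl), hf 1 (fun hcon => hcon.2 rfl)⟩
    have hsub : Fintype.card {x : Fin (m+3) // x ≠ 0 ∧ x ≠ 1} = m + 1 := by
      have : ∀ x : Fin (m+3), (x ≠ 0 ∧ x ≠ 1) ↔ ¬(x = 0 ∨ x = 1) := by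
        intro x; push_neg; rfl
      rw [Fintype.card_congr (Equiv.subtypeEquivRight this)]
      rw [Fintype.card_subtype_compl]
      have h2 : Fintype.card {x : Fin (m+3) // x = 0 ∨ x = 1} = 2 := by
        rw [Fintype.card_subtype]
        have : (Finset.univ.filter (fun x : Fin (m+3) => x = 0 ∨ x = 1)) = {0, 1} := by
          ext x
          simp [Finset.mem_insert, Finset.mem_singleton]
        rw [this, Finset.card_insert_of_notMem (by simp [h01]), Finset.card_singleton]
      rw [h2, Fintype.card_fin]
      omega
    rw [Nat.card_congr (equiv1.trans equiv2), Nat.card_eq_fintype_card,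
      Fintype.card_perm, hsub]
  rw [← hEcard]
  -- the bijection e ↦ e ∘ finRotate ∘ e⁻¹
  symm
  refine Nat.card_eq_of_bijective (fun e =>
    ⟨e.1.permCongr (finRotate (m+3)), ?_, ?_⟩) ⟨?_, ?_⟩
  · constructor
    · have : e.1.permCongr (finRotate (m+3)) = e.1 * (finRotate (m+3)) * e.1⁻¹ := by
        ext x
        rw [Equiv.permCongr_apply]
        rfl
      rw [this]
      exact (isCycle_finRotate (n := m+1)).conj
    · intro x
      rw [Equiv.permCongr_apply]
      intro h
      have h2 : finRotate (m+3) (e.1.symm x) = e.1.symm x := by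
        have := congrArg e.1.symm h
        rwa [Equiv.symm_apply_apply] at this
      exact finRotate_no_fixed m _ h2
  · rw [Equiv.permCongr_apply]
    have h1 : e.1.symm c = 0 := by
      rw [Equiv.symm_apply_eq]
      exact e.2.1.symm
    rw [h1]
    have h2 : finRotate (m+3) 0 = 1 := by
      rw [finRotate_succ_apply, zero_add]
    rw [h2, e.2.2]
  · -- injectivity
    rintro ⟨e, he⟩ ⟨e', he'⟩ hee
    have hval := congrArg Subtype.val hee
    simp only at hval
    have hcomm : ∀ x, e (finRotate (m+3) (e.symm x)) = e' (finRotate (m+3) (e'.symm x)) := by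
      intro x
      have := congrArg (fun σ : Equiv.Perm (Fin (m+3)) => σ x) hval
      simpa [Equiv.permCongr_apply] using this
    -- k := e'⁻¹ ∘ e commutes with finRotate and fixes 0
    set k := e'.symm.trans e with hk
    have hk0 : e'.symm (e 0) = 0 := by
      rw [he.1, ← he'.1, Equiv.symm_apply_apply]
    have hkcomm : ∀ x, e'.symm (e (finRotate (m+3) x)) = finRotate (m+3) (e'.symm (e x)) := by
      intro x
      have := hcomm (e x)
      rw [Equiv.symm_apply_apply] at this
      rw [this, Equiv.symm_apply_apply]
    have hkpow : ∀ j : ℕ, e'.symm (e (((finRotate (m+3))^j) 0)) = ((finRotate (m+3))^j) 0 := by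
      intro j
      induction j with
      | zero => exact hk0
      | succ j ih =>
        have hp : ((finRotate (m+3))^(j+1)) 0 = finRotate (m+3) (((finRotate (m+3))^j) 0) := by
          rw [pow_succ']; rfl
        rw [hp, hkcomm, ih]
    have hkid : ∀ x : Fin (m+3), e'.symm (e x) = x := by
      intro x
      have hx : x = ((finRotate (m+3))^(x.val)) 0 := by
        rw [finRotate_pow_zero, Fin.cast_val_eq_self]
      rw [hx]
      exact hkpow x.val
    apply Subtype.ext
    ext x
    have := hkid x
    have h2 := congrArg e' this
    rw [Equiv.apply_symm_apply] at h2
    exact congrArg Fin.val h2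
  · -- surjectivity
    rintro ⟨σ, hσ, hσc⟩
    have hinj : Function.Injective (fun j : Fin (m+3) => (σ^(j.val)) c) := by
      intro a b hab
      have : a.val = b.val := by
        refine cyclic_orbit_inj hσ c ?_ ?_ hab <;>
          · rw [Fintype.card_fin]; exact Fin.is_lt _
      exact Fin.ext this
    have hbij := Finite.injective_iff_bijective.mp hinj
    set e : Equiv.Perm (Fin (m+3)) := Equiv.ofBijective _ hbij with he
    have heapp : ∀ j : Fin (m+3), e j = (σ^(j.val)) c := fun j => rfl
    have he0 : e 0 = c := by rw [heapp]; rfl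
    have he1 : e 1 = s := by
      rw [heapp]
      have : ((1 : Fin (m+3)) : ℕ) = 1 := Fin.val_one _
      rw [this, pow_one, hσc]
    refine ⟨⟨e, he0, he1⟩, ?_⟩
    apply Subtype.ext
    show e.permCongr (finRotate (m+3)) = σ
    ext x
    rw [Equiv.permCongr_apply]
    set j := e.symm x with hj
    have hx : e j = x := Equiv.apply_symm_apply e x
    rw [finRotate_succ_apply, heapp, Fin.val_add_one]
    have hord : σ ^ (m+3) = 1 := by
      have := cyclic_pow_card hσ
      rwa [Fintype.card_fin] at this
    by_cases hlast : j = Fin.last (m+2)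
    · rw [if_pos hlast]
      have hxval : x = (σ ^ (m+2)) c := by
        rw [← hx, heapp, hlast, Fin.val_last]
      rw [hxval]
      have h5 : (σ ^ (m+3)) c = σ ((σ ^ (m+2)) c) := by
        have hps : σ ^ (m+3) = σ * σ ^ (m+2) := pow_succ' σ (m+2)
        rw [hps]; rfl
      have heq : (σ ^ 0) c = σ ((σ ^ (m+2)) c) := by
        rw [← h5, hord]; rfl
      exact congrArg Fin.val heq
    · rw [if_neg hlast]
      rw [← hx, heapp]
      have heq : (σ ^ (j.val + 1)) c = σ ((σ ^ j.val) c) := by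
        have hps : σ ^ (j.val + 1) = σ * σ ^ j.val := pow_succ' σ j.val
        rw [hps]; rfl
      exact congrArg Fin.val heq

/-- the number of cyclic permutations of `Fin (m+3)` -/
lemma card_cyclic (m : ℕ) :
    Nat.card {σ : Equiv.Perm (Fin (m+3)) // IsCyclicPerm σ} = (m+2).factorial := by
  classical
  set K := {σ : Equiv.Perm (Fin (m+3)) // IsCyclicPerm σ} with hK
  haveI : Fintype K := Fintype.ofFinite _
  have hfib : ∀ s : Fin (m+3), s ≠ 0 →
      (Finset.univ.filter (fun σ : K => σ.val 0 = s)).card = (m+1).factorial := by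
    intro s hs
    have h1 : (Finset.univ.filter (fun σ : K => σ.val 0 = s)).card
        = Fintype.card {σ : K // σ.val 0 = s} := (Fintype.card_subtype _).symm
    rw [h1, ← Nat.card_eq_fintype_card]
    calc Nat.card {σ : K // σ.val 0 = s}
        = Nat.card {σ : Equiv.Perm (Fin (m+3)) // IsCyclicPerm σ ∧ σ 0 = s} :=
          Nat.card_congr (Equiv.subtypeSubtypeEquivSubtypeInter IsCyclicPerm
            (fun σ => σ 0 = s))
      _ = (m+1).factorial := card_cyclic_fiber m 0 s (Ne.symm hs)
  have hfib0 : (Finset.univ.filter (fun σ : K => σ.val 0 = 0)).card = 0 := by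
    rw [Finset.card_eq_zero, Finset.filter_eq_empty_iff]
    intro σ _
    exact σ.2.2 0
  rw [Nat.card_eq_fintype_card]
  have hdecomp : Fintype.card K
      = ∑ s : Fin (m+3), (Finset.univ.filter (fun σ : K => σ.val 0 = s)).card := by
    rw [← Finset.card_univ]
    exact Finset.card_eq_sum_card_fiberwise (fun σ _ => Finset.mem_univ _)
  rw [hdecomp, ← Finset.sum_erase_add _ _ (Finset.mem_univ (0 : Fin (m+3))), hfib0]
  rw [Finset.sum_congr rfl (fun s hs => hfib s (Finset.ne_of_mem_erase hs))]
  rw [Finset.sum_const, Finset.card_erase_of_mem (Finset.mem_univ _), Finset.card_univ,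
    Fintype.card_fin]
  simp [Nat.factorial_succ]

end Counting

open CGraph in
/-- Proposition `general G-degree`: for a `(d+1)`-colored graph of order `2p`
(`d ≥ 2`), `ω_G(Γ) = ((d−1)!/2)·(d + (d/2)(d−1)p − Σ_{{r,s}} g_{rs})`, the sum over unordered
pairs of distinct colors (written below as half the sum over ordered pairs of distinct colors);
consequently, for `d ≥ 3` the G-degree is a non-negative integer multiple of `(d−1)!/2`. -/
theorem stmt0 {d p : ℕ} (hd : 2 ≤ d) {V : Type} [Finite V]
    (G : CGraph (Fin (d + 1)) V) (hconn : G.Conn) (horder : Nat.card V = 2 * p) :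
    G.omegaG = ((d - 1).factorial : ℚ) / 2 *
        ((d : ℚ) + (d : ℚ) / 2 * ((d : ℚ) - 1) * (p : ℚ) -
          (∑ r : Fin (d + 1), ∑ s : Fin (d + 1),
            if r = s then 0 else (G.g {r, s} : ℚ)) / 2) ∧
      (3 ≤ d → ∃ k : ℕ, G.omegaG = (k : ℚ) * (((d - 1).factorial : ℚ) / 2)) := by
  classical
  obtain ⟨m, rfl⟩ : ∃ m, d = m + 2 := ⟨d - 2, by omega⟩
  set K := {σ : Equiv.Perm (Fin (m + 2 + 1)) // IsCyclicPerm σ} with hKdef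
  haveI : Fintype K := Fintype.ofFinite _
  have hKcard : Fintype.card K = (m+2).factorial := by
    rw [← Nat.card_eq_fintype_card]
    exact card_cyclic m
  -- fiber cardinalities
  have hfib : ∀ c s' : Fin (m+2+1), c ≠ s' →
      (Finset.univ.filter (fun σ : K => σ.val c = s')).card = (m+1).factorial := by
    intro c s' hcs
    have h1 : (Finset.univ.filter (fun σ : K => σ.val c = s')).card
        = Fintype.card {σ : K // σ.val c = s'} := (Fintype.card_subtype _).symm
    rw [h1, ← Nat.card_eq_fintype_card]
    calc Nat.card {σ : K // σ.val c = s'}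
        = Nat.card {σ : Equiv.Perm (Fin (m+3)) // IsCyclicPerm σ ∧ σ c = s'} :=
          Nat.card_congr (Equiv.subtypeSubtypeEquivSubtypeInter IsCyclicPerm
            (fun σ => σ c = s'))
      _ = (m+1).factorial := card_cyclic_fiber m c s' hcs
  have hfib0 : ∀ c : Fin (m+2+1),
      (Finset.univ.filter (fun σ : K => σ.val c = c)) = ∅ := by
    intro c
    rw [Finset.filter_eq_empty_iff]
    intro σ _
    exact σ.2.2 c
  set Snat : ℕ := ∑ r : Fin (m+2+1), ∑ s : Fin (m+2+1),
    if r = s then 0 else G.g {r, s} with hSnatdef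
  -- the double sum over cyclic permutations
  have hinner : ∀ c : Fin (m+2+1), (∑ σ : K, G.g {c, σ.val c})
      = ∑ s : Fin (m+2+1), (if c = s then 0 else (m+1).factorial * G.g {c, s}) := by
    intro c
    rw [← Finset.sum_fiberwise_of_maps_to (g := fun σ : K => σ.val c)
      (t := Finset.univ) (fun σ _ => Finset.mem_univ _) (fun σ => G.g {c, σ.val c})]
    refine Finset.sum_congr rfl fun s' _ => ?_
    by_cases hcs : c = s'
    · rw [if_pos hcs, ← hcs, hfib0 c, Finset.sum_empty]
    · rw [if_neg hcs]
      have hcongr : ∀ σ ∈ Finset.univ.filter (fun σ : K => σ.val c = s'),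
          G.g {c, σ.val c} = G.g {c, s'} := by
        intro σ hσ
        rw [(Finset.mem_filter.mp hσ).2]
      rw [Finset.sum_congr rfl hcongr, Finset.sum_const, hfib c s' hcs, smul_eq_mul]
  have hsum : (∑ σ : K, ∑ c : Fin (m+2+1), G.g {c, σ.val c})
      = (m+1).factorial * Snat := by
    rw [Finset.sum_comm, Finset.sum_congr rfl (fun c _ => hinner c), hSnatdef,
      Finset.mul_sum]
    refine Finset.sum_congr rfl fun c _ => ?_
    rw [Finset.mul_sum]
    refine Finset.sum_congr rfl fun s' _ => ?_
    by_cases hcs : c = s' <;> simp [hcs]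
  -- the per-sigma inequality
  have hper : ∀ σ : K, (∑ c : Fin (m+2+1), G.g {c, σ.val c}) ≤ (m+1) * p + 2 := by
    intro σ
    have h := G.sum_g_cyclic_le hconn σ.val σ.2
    rw [horder, Fintype.card_fin] at h
    have hexp : (m+2+1) * (2*p) = 2*(m*p) + 6*p := by ring
    have hexp2 : (m+1) * p = m*p + p := by ring
    omega
  -- the key bound on Snat
  have hSle : Snat ≤ (m+2) * ((m+1) * p + 2) := by
    have h1 : ∑ σ : K, (∑ c : Fin (m+2+1), G.g {c, σ.val c})
        ≤ ∑ _σ : K, ((m+1) * p + 2) :=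
      Finset.sum_le_sum (fun σ _ => hper σ)
    rw [hsum, Finset.sum_const, Finset.card_univ, hKcard, smul_eq_mul] at h1
    have h2 : (m+2).factorial * ((m+1)*p + 2)
        = (m+1).factorial * ((m+2) * ((m+1)*p+2)) := by
      rw [Nat.factorial_succ]
      ring
    rw [h2] at h1
    exact Nat.le_of_mul_le_mul_left h1 (Nat.factorial_pos (m+1))
  -- Snat is even
  obtain ⟨S2, hS2⟩ : ∃ S2, Snat = 2 * S2 := by
    have hz : ((Snat : ZMod 2)) = 0 := by
      have h0 : ((Snat : ZMod 2)) = ∑ pq ∈ Finset.univ ×ˢ Finset.univ,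
          (if pq.1 = pq.2 then (0 : ZMod 2) else (G.g {pq.1, pq.2} : ZMod 2)) := by
        rw [Finset.sum_product, hSnatdef]
        push_cast
        rfl
      rw [h0]
      refine Finset.sum_involution (fun pq _ => (pq.2, pq.1)) ?_ ?_ ?_ ?_
      · intro pq _
        by_cases hpq : pq.1 = pq.2
        · simp [hpq]
        · rw [if_neg hpq, if_neg (Ne.symm hpq)]
          have hset : ({pq.2, pq.1} : Set (Fin (m+2+1))) = {pq.1, pq.2} :=
            Set.pair_comm _ _
          show _ + (G.g {pq.2, pq.1} : ZMod 2) = 0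
          rw [hset]
          exact CharTwo.add_self_eq_zero _
      · intro pq _ hne hcon
        apply hne
        have h1 : pq.2 = pq.1 := congrArg Prod.fst hcon
        rw [if_pos h1.symm]
      · intro pq _; exact Finset.mem_univ _
      · intro pq _; rfl
    have := (ZMod.natCast_eq_zero_iff Snat 2).mp hz
    exact ⟨Snat / 2, (Nat.div_mul_cancel this).symm ▸ by omega⟩
  obtain ⟨E2, hE2⟩ : ∃ E2, (m+1)*(m+2) = 2 * E2 := by
    obtain ⟨r, hr⟩ := Nat.even_mul_succ_self (m+1)
    have hr' : (m+1)*(m+2) = r + r := hr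
    exact ⟨r, by omega⟩
  -- rewrite the bound in even form
  have hXle : S2 ≤ (m+2) + E2 * p := by
    have hA : (m+2) * ((m+1)*p + 2) = 2*((m+2) + E2*p) := by
      have : (m+2) * ((m+1)*p + 2) = ((m+1)*(m+2))*p + 2*(m+2) := by ring
      rw [this, hE2]
      ring
    rw [hA, hS2] at hSle
    omega
  set k : ℕ := (m+2) + E2 * p - S2 with hkdef
  have hk2 : 2 * k + Snat = 2 * ((m+2) + E2 * p) := by
    rw [hkdef, hS2]
    omega
  -- ℚ-level computations
  have hg1 : G.g Set.univ = 1 := hconn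
  have hSnatQ : ((Snat : ℚ)) = ∑ r : Fin (m+2+1), ∑ s : Fin (m+2+1),
      if r = s then 0 else (G.g {r, s} : ℚ) := by
    rw [hSnatdef]
    push_cast
    rfl
  have homega : G.omegaG = (∑ σ : K, G.rho σ.val) / 2 := by
    rw [CGraph.omegaG, finsum_eq_sum_of_fintype]
  have hrho : ∀ σ : K, G.rho σ.val
      = (2 - (∑ c : Fin (m+2+1), (G.g {c, σ.val c} : ℚ)) + ((m:ℚ)+1) * (p:ℚ)) / 2 := by
    intro σ
    rw [CGraph.rho, CGraph.chi, finsum_eq_sum_of_fintype, hg1, horder,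
      Nat.card_eq_fintype_card (α := Fin (m+2+1)), Fintype.card_fin]
    push_cast
    ring
  have hcastsum : ∑ σ : K, ∑ c : Fin (m+2+1), (G.g {c, σ.val c} : ℚ)
      = ((m+1).factorial : ℚ) * (Snat : ℚ) := by
    have := congrArg (Nat.cast : ℕ → ℚ) hsum
    push_cast at this
    convert this using 2 <;> push_cast <;> ring
  have hsumrho : ∑ σ : K, G.rho σ.val
      = (((m+2).factorial : ℚ) * (2 + ((m:ℚ)+1)*(p:ℚ))
        - ((m+1).factorial : ℚ) * (Snat : ℚ)) / 2 := by
    rw [Finset.sum_congr rfl (fun σ _ => hrho σ), ← Finset.sum_div]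
    congr 1
    have hterm : ∀ σ : K, (2 - (∑ c : Fin (m+2+1), (G.g {c, σ.val c} : ℚ))
        + ((m:ℚ)+1) * (p:ℚ))
        = (2 + ((m:ℚ)+1)*(p:ℚ)) - (∑ c : Fin (m+2+1), (G.g {c, σ.val c} : ℚ)) := by
      intro σ; ring
    rw [Finset.sum_congr rfl (fun σ _ => hterm σ), Finset.sum_sub_distrib,
      Finset.sum_const, Finset.card_univ, hKcard, hcastsum, nsmul_eq_mul]
  have hfactQ : (((m+2).factorial : ℚ)) = ((m:ℚ)+2) * ((m+1).factorial : ℚ) := by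
    rw [Nat.factorial_succ]
    push_cast
    ring
  have hd1 : (m + 2 - 1) = m + 1 := rfl
  -- main formula
  have hmain : G.omegaG = ((m+1).factorial : ℚ) / 2 *
      (((m:ℚ)+2) + ((m:ℚ)+2) / 2 * (((m:ℚ)+2) - 1) * (p:ℚ) - (Snat : ℚ) / 2) := by
    rw [homega, hsumrho, hfactQ]
    ring
  constructor
  · rw [hd1, ← hSnatQ, hmain]
    push_cast
    try ring
  · intro _
    refine ⟨k, ?_⟩
    rw [hd1, hmain]
    have hkQ : 2 * (k:ℚ) + (Snat:ℚ) = 2 * (((m:ℚ)+2) + (E2:ℚ) * (p:ℚ)) := by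
      have := congrArg (Nat.cast : ℕ → ℚ) hk2
      push_cast at this
      convert this using 1 <;> push_cast <;> ring
    have hE2Q : ((m:ℚ)+1)*((m:ℚ)+2) = 2 * (E2:ℚ) := by
      have := congrArg (Nat.cast : ℕ → ℚ) hE2
      push_cast at this
      convert this using 1 <;> push_cast <;> ring
    have hXk : (((m:ℚ)+2) + ((m:ℚ)+2) / 2 * (((m:ℚ)+2) - 1) * (p:ℚ) - (Snat : ℚ) / 2)
        = (k : ℚ) := by
      have h1 : (Snat : ℚ) = 2 * (((m:ℚ)+2) + (E2:ℚ) * (p:ℚ)) - 2 * (k:ℚ) := by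
        linarith [hkQ]
      rw [h1]
      linear_combination ((p:ℚ)/2) * hE2Q
    rw [hXk]
    push_cast
    try ring
end

section
/- Let d ≥ 2 and let (Γ,γ) and (Γ′,γ′) be two (d+1)-colored graphs. Then for every vertex v ∈ V(Γ) and every vertex v′ ∈ V(Γ′), the graph connected sum satisfies ω_G(Γ #_{vv′} Γ′) = ω_G(Γ) + ω_G(Γ′). -/
namespace CGraph

variable {C V V' : Type}

/-- auxiliary: the color-`c` involution of the graph connected sum `Γ #_{v v'} Γ'`:
the vertices `v, v'` are deleted and, for each color `c`, the `c`-colored half-edge left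
hanging at the former `c`-neighbor of `v` is welded to the one hanging at the former
`c`-neighbor of `v'`. -/
def connSumInv [DecidableEq V] [DecidableEq V'] (G : CGraph C V) (G' : CGraph C V')
    (v : V) (v' : V') (c : C) :
    ({w : V // w ≠ v} ⊕ {w : V' // w ≠ v'}) → ({w : V // w ≠ v} ⊕ {w : V' // w ≠ v'})
  | Sum.inl w =>
      if h : G.inv c w.val = v then Sum.inr ⟨G'.inv c v', G'.no_fixed c v'⟩
      else Sum.inl ⟨G.inv c w.val, h⟩
  | Sum.inr w =>
      if h : G'.inv c w.val = v' then Sum.inl ⟨G.inv c v, G.no_fixed c v⟩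
      else Sum.inr ⟨G'.inv c w.val, h⟩

/-- the graph connected sum `Γ #_{v v'} Γ'` of two colored graphs with the same color set. -/
def connSum [DecidableEq V] [DecidableEq V'] (G : CGraph C V) (G' : CGraph C V')
    (v : V) (v' : V') : CGraph C ({w : V // w ≠ v} ⊕ {w : V' // w ≠ v'}) where
  inv := connSumInv G G' v v'
  invol c x := by
    rcases x with w | w
    · by_cases h : G.inv c w.val = v
      · have h2 : G'.inv c (G'.inv c v') = v' := G'.invol c v'
        have h3 : G.inv c v = w.val := by
          conv_lhs => rw [← h]
          exact G.invol c w.val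
        simp only [connSumInv, dif_pos h, dif_pos h2]
        exact congrArg Sum.inl (Subtype.ext h3)
      · have h2 : G.inv c (G.inv c w.val) ≠ v := by
          rw [G.invol]; exact w.property
        simp only [connSumInv, dif_neg h, dif_neg h2]
        exact congrArg Sum.inl (Subtype.ext (G.invol c w.val))
    · by_cases h : G'.inv c w.val = v'
      · have h2 : G.inv c (G.inv c v) = v := G.invol c v
        have h3 : G'.inv c v' = w.val := by
          conv_lhs => rw [← h]
          exact G'.invol c w.val
        simp only [connSumInv, dif_pos h, dif_pos h2]
        exact congrArg Sum.inr (Subtype.ext h3)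
      · have h2 : G'.inv c (G'.inv c w.val) ≠ v' := by
          rw [G'.invol]; exact w.property
        simp only [connSumInv, dif_neg h, dif_neg h2]
        exact congrArg Sum.inr (Subtype.ext (G'.invol c w.val))
  no_fixed c x := by
    rcases x with w | w
    · by_cases h : G.inv c w.val = v
      · simp only [connSumInv, dif_pos h]
        exact fun hh => by cases hh
      · simp only [connSumInv, dif_neg h]
        intro hh
        exact G.no_fixed c w.val (congrArg Subtype.val (Sum.inl.inj hh))
    · by_cases h : G'.inv c w.val = v'
      · simp only [connSumInv, dif_pos h]
        exact fun hh => by cases hh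
      · simp only [connSumInv, dif_neg h]
        intro hh
        exact G'.no_fixed c w.val (congrArg Subtype.val (Sum.inr.inj hh))

end CGraph


section Core

variable {V : Type} [Finite V]

set_option linter.unusedSectionVars false

private lemma invol_conj {A S : Equiv.Perm V} (hA : A * A = 1) (hconj : A * S * A = S⁻¹) (t : ℕ) :
    A * S ^ t * A = S⁻¹ ^ t := by
  have hAinv : A⁻¹ = A := by
    rw [inv_eq_iff_mul_eq_one]; exact hA
  calc A * S ^ t * A = A * S ^ t * A⁻¹ := by rw [hAinv]
    _ = (A * S * A⁻¹) ^ t := (conj_pow).symm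
    _ = (A * S * A) ^ t := by rw [hAinv]
    _ = (S⁻¹) ^ t := by rw [hconj]

private lemma swap_conj {A S : Equiv.Perm V} (hA : A * A = 1) (hconj : A * S * A = S⁻¹) (t : ℕ) :
    A * S ^ t = S⁻¹ ^ t * A := by
  have h := invol_conj hA hconj t
  have h2 : A * S ^ t * A * A = S⁻¹ ^ t * A := by rw [h]
  rwa [mul_assoc (A * S ^ t) A A, hA, mul_one] at h2

/-- no odd alternating word in two fixed-point-free involutions fixes a point -/
private lemma odd_no_return (a b : V → V) (ha : Function.Involutive a) (hb : Function.Involutive b)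
    (hfa : ∀ x, a x ≠ x) (hfb : ∀ x, b x ≠ x) (m : ℕ) (v : V) :
    ((ha.toPerm * hb.toPerm) ^ m) (a v) ≠ v := by
  set A := ha.toPerm with hAdef
  set B := hb.toPerm with hBdef
  have hAapp : ∀ x, A x = a x := fun x => rfl
  have hBapp : ∀ x, B x = b x := fun x => rfl
  have hA2 : A * A = 1 := by
    ext x
    simp only [Equiv.Perm.mul_apply, Equiv.Perm.coe_one, id_eq, hAapp]
    exact ha x
  have hB2 : B * B = 1 := by
    ext x
    simp only [Equiv.Perm.mul_apply, Equiv.Perm.coe_one, id_eq, hBapp]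
    exact hb x
  set S := A * B with hSdef
  have hSinv : S⁻¹ = B * A := by
    rw [eq_comm, eq_inv_iff_mul_eq_one, hSdef]
    calc B * A * (A * B) = B * (A * A) * B := by group
      _ = B * B := by rw [hA2]; group
      _ = 1 := hB2
  have hconjA : A * S * A = S⁻¹ := by
    rw [hSdef, hSinv]
    calc A * (A * B) * A = (A * A) * (B * A) := by group
      _ = B * A := by rw [hA2]; group
  have hconjB : B * S * B = S⁻¹ := by
    rw [hSdef, hSinv]
    calc B * (A * B) * B = (B * A) * (B * B) := by group
      _ = (B * A) * 1 := by rw [hB2]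
      _ = B * A := by group
  intro hret
  rcases Nat.even_or_odd m with ⟨t, ht⟩ | ⟨t, ht⟩
  · -- m = t + t : A fixes z := S^t (A v)
    have key : A ((S ^ t) (A v)) = (S ^ t) (A v) := by
      calc A ((S ^ t) (A v)) = (A * S ^ t) (A v) := rfl
        _ = (S⁻¹ ^ t * A) (A v) := by rw [swap_conj hA2 hconjA]
        _ = (S⁻¹ ^ t) (A (A v)) := rfl
        _ = (S⁻¹ ^ t) v := by rw [hAapp, hAapp, ha v]
        _ = (S⁻¹ ^ t) ((S ^ m) (A v)) := by rw [hAapp, hret]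
        _ = (S⁻¹ ^ t * S ^ m) (A v) := rfl
        _ = (S ^ t) (A v) := by
            congr 1
            rw [inv_pow, ht, pow_add S t t, inv_mul_cancel_left]
    rw [hAapp] at key
    exact hfa _ key
  · -- m = 2t+1 : B fixes z := S^t (A v)
    have key : B ((S ^ t) (A v)) = (S ^ t) (A v) := by
      calc B ((S ^ t) (A v)) = (B * S ^ t) (A v) := rfl
        _ = (S⁻¹ ^ t * B) (A v) := by rw [swap_conj hB2 hconjB]
        _ = (S⁻¹ ^ t) ((B * A) v) := rfl
        _ = (S⁻¹ ^ t) (S⁻¹ v) := by rw [← hSinv]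
        _ = (S⁻¹ ^ (t + 1)) v := by rw [pow_succ]; rfl
        _ = (S⁻¹ ^ (t + 1)) ((S ^ m) (A v)) := by rw [show (S ^ m) (A v) = v from hret]
        _ = (S⁻¹ ^ (t + 1) * S ^ m) (A v) := rfl
        _ = (S ^ t) (A v) := by
            congr 1
            have hm : m = (t + 1) + t := by omega
            rw [inv_pow, hm, pow_add S (t + 1) t, inv_mul_cancel_left]
    rw [hBapp] at key
    exact hfb _ key

/-- Core connectivity lemma: in the union of two fixed-point-free perfect matchings
(a disjoint union of cycles), the two neighbours `a v` and `b v` of `v` are connected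
by a path avoiding `v`. -/
lemma two_color_path (a b : V → V) (ha : Function.Involutive a) (hb : Function.Involutive b)
    (hfa : ∀ x, a x ≠ x) (hfb : ∀ x, b x ≠ x) (v : V)
    (E : V → V → Prop) (hE : Equivalence E)
    (hEa : ∀ x, x ≠ v → a x ≠ v → E x (a x))
    (hEb : ∀ x, x ≠ v → b x ≠ v → E x (b x)) : E (a v) (b v) := by
  set A := ha.toPerm with hAdef
  set B := hb.toPerm with hBdef
  set S := A * B with hSdef
  have hAapp : ∀ x, A x = a x := fun x => rfl
  have hSapp : ∀ x, S x = a (b x) := fun x => rfl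
  have hnr : ∀ (m : ℕ) (w : V), ((S ^ m)) (a w) ≠ w :=
    fun m w => odd_no_return a b ha hb hfa hfb m w
  have hex : ∃ n, 0 < n ∧ (S ^ n) (a v) = a v := by
    have hni : ¬ Function.Injective (fun m : ℕ => (S ^ m) (a v)) := by
      intro hinj
      exact not_injective_infinite_finite _ hinj
    rw [Function.not_injective_iff] at hni
    obtain ⟨m, m', hmm, hne⟩ := hni
    have key : ∀ p q : ℕ, p < q → (S ^ p) (a v) = (S ^ q) (a v) →
        ∃ n, 0 < n ∧ (S ^ n) (a v) = a v := by
      intro p q hpq heq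
      refine ⟨q - p, by omega, ?_⟩
      apply (S ^ p).injective
      have hsplit : S ^ p * S ^ (q - p) = S ^ q := by rw [← pow_add]; congr 1; omega
      calc (S ^ p) ((S ^ (q - p)) (a v)) = (S ^ p * S ^ (q - p)) (a v) := rfl
        _ = (S ^ q) (a v) := by rw [hsplit]
        _ = (S ^ p) (a v) := heq.symm
    rcases Nat.lt_or_ge m m' with h | h
    · exact key m m' h hmm
    · exact key m' m (by omega) hmm.symm
  classical
  have hnpos : 0 < Nat.find hex ∧ (S ^ Nat.find hex) (a v) = a v := Nat.find_spec hex
  set n := Nat.find hex with hndef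
  have hbv : (S ^ (n - 1)) (a v) = b v := by
    apply S.injective
    have hsplit : S * S ^ (n - 1) = S ^ n := by
      rw [← pow_succ']; congr 1; omega
    calc S ((S ^ (n - 1)) (a v)) = (S * S ^ (n - 1)) (a v) := rfl
      _ = (S ^ n) (a v) := by rw [hsplit]
      _ = a v := hnpos.2
      _ = S (b v) := by rw [hSapp, hb v]
  have walk : ∀ j, j ≤ n - 1 → E (a v) ((S ^ j) (a v)) := by
    intro j
    induction j with
    | zero => intro _; simpa using hE.refl (a v)
    | succ j ih =>
      intro hj
      have hx := ih (by omega)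
      set x := (S ^ j) (a v) with hxdef
      have hxv : x ≠ v := hnr j v
      have hbxv : b x ≠ v := by
        intro hbx
        have h1 : x = b v := by rw [← hbx, hb x]
        have h2 : (S ^ j) (a v) = (S ^ (n - 1)) (a v) := by rw [← hxdef, h1, ← hbv]
        have h3 : (S ^ (n - 1 - j)) (a v) = a v := by
          apply (S ^ j).injective
          have hsplit : S ^ j * S ^ (n - 1 - j) = S ^ (n - 1) := by
            rw [← pow_add]; congr 1; omega
          calc (S ^ j) ((S ^ (n - 1 - j)) (a v)) = (S ^ j * S ^ (n - 1 - j)) (a v) := rfl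
            _ = (S ^ (n - 1)) (a v) := by rw [hsplit]
            _ = (S ^ j) (a v) := h2.symm
        exact Nat.find_min hex (m := n - 1 - j) (by omega) ⟨by omega, h3⟩
      have e3 : a (b x) = (S ^ (j + 1)) (a v) := by
        rw [← hSapp, hxdef]
        calc S ((S ^ j) (a v)) = (S * S ^ j) (a v) := rfl
          _ = (S ^ (j + 1)) (a v) := by rw [← pow_succ']
      have habx : a (b x) ≠ v := by rw [e3]; exact hnr (j + 1) v
      have e1 : E x (b x) := hEb x hxv hbxv
      have e2 : E (b x) (a (b x)) := hEa (b x) hbxv habx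
      rw [← e3]
      exact hE.trans hx (hE.trans e1 e2)
  have hfin := walk (n - 1) (le_refl _)
  rwa [hbv] at hfin

end Core
section Aux

private lemma eqvGen_constant {α β : Type*} {r : α → α → Prop} {f : α → β}
    (h : ∀ x y, r x y → f x = f y) :
    ∀ x y, Relation.EqvGen r x y → f x = f y := by
  intro x y hxy
  induction hxy with
  | rel u w h' => exact h u w h'
  | refl u => rfl
  | symm u w _ ih => exact ih.symm
  | trans u w z _ _ ih1 ih2 => exact ih1.trans ih2

private lemma card_ne_add_one {α : Type} [Finite α] (a : α) :
    Nat.card {x : α // x ≠ a} + 1 = Nat.card α := by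
  classical
  have h := Nat.card_congr (Equiv.optionSubtypeNe a)
  rw [← h, Finite.card_option]

end Aux

namespace CGraph

section Merge

open scoped Classical

variable {C V V' : Type} [DecidableEq V] [DecidableEq V']
variable (G : CGraph C V) (G' : CGraph C V') (v : V) (v' : V') (B : Set C) (c₀ : C)

/-- the setoid of `B`-components of the connected sum -/
private def sT : Setoid ({w : V // w ≠ v} ⊕ {w : V' // w ≠ v'}) :=
  Relation.EqvGen.setoid (fun x y => ∃ c ∈ B, (G.connSum G' v v').inv c x = y)

/-- the setoid of `B`-components of a colored graph -/
private def sC (G : CGraph C V) (B : Set C) : Setoid V :=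
  Relation.EqvGen.setoid (fun x y => ∃ c ∈ B, G.inv c x = y)

private lemma edge_T {x y} (c : C) (hc : c ∈ B) (h : (G.connSum G' v v').inv c x = y) :
    Quotient.mk (sT G G' v v' B) x = Quotient.mk (sT G G' v v' B) y :=
  Quotient.sound (Relation.EqvGen.rel _ _ ⟨c, hc, h⟩)

private lemma edge_C {G : CGraph C V} {B : Set C} {x y : V} (c : C) (hc : c ∈ B)
    (h : G.inv c x = y) :
    Quotient.mk (sC G B) x = Quotient.mk (sC G B) y :=
  Quotient.sound (Relation.EqvGen.rel _ _ ⟨c, hc, h⟩)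

private lemma inv_inl (c : C) (w : {w : V // w ≠ v}) (h : G.inv c w.val ≠ v) :
    (G.connSum G' v v').inv c (Sum.inl w) = Sum.inl ⟨G.inv c w.val, h⟩ := dif_neg h

private lemma inv_inl_pos (c : C) (w : {w : V // w ≠ v}) (h : G.inv c w.val = v) :
    (G.connSum G' v v').inv c (Sum.inl w) = Sum.inr ⟨G'.inv c v', G'.no_fixed c v'⟩ := dif_pos h

private lemma inv_inr (c : C) (w : {w : V' // w ≠ v'}) (h : G'.inv c w.val ≠ v') :
    (G.connSum G' v v').inv c (Sum.inr w) = Sum.inr ⟨G'.inv c w.val, h⟩ := dif_neg h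

private lemma inv_inr_pos (c : C) (w : {w : V' // w ≠ v'}) (h : G'.inv c w.val = v') :
    (G.connSum G' v v').inv c (Sum.inr w) = Sum.inl ⟨G.inv c v, G.no_fixed c v⟩ := dif_pos h

/-- the class of the welding vertices -/
private def weld : Quotient (sT G G' v v' B) :=
  Quotient.mk _ (Sum.inr ⟨G'.inv c₀ v', G'.no_fixed c₀ v'⟩)

/-- all welding vertices lie in one class -/
private def H1Prop : Prop :=
  ∀ c ∈ B, Quotient.mk (sT G G' v v' B) (Sum.inr ⟨G'.inv c v', G'.no_fixed c v'⟩) =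
    weld G G' v v' B c₀

private noncomputable def gVfun : V → Quotient (sT G G' v v' B) :=
  fun w => if h : w = v then weld G G' v v' B c₀ else Quotient.mk _ (Sum.inl ⟨w, h⟩)

private noncomputable def gV'fun : V' → Quotient (sT G G' v v' B) :=
  fun w => if h : w = v' then weld G G' v v' B c₀ else Quotient.mk _ (Sum.inr ⟨w, h⟩)

private lemma gVfun_edge (h1 : H1Prop G G' v v' B c₀) :
    ∀ x y : V, (∃ c ∈ B, G.inv c x = y) → gVfun G G' v v' B c₀ x = gVfun G G' v v' B c₀ y := by
  rintro x y ⟨c, hc, rfl⟩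
  by_cases hx : x = v
  · subst hx
    have hy : G.inv c x ≠ x := G.no_fixed c x
    rw [gVfun, gVfun, dif_pos rfl, dif_neg hy]
    rw [edge_T G G' x v' B c hc (inv_inl_pos G G' x v' c ⟨G.inv c x, hy⟩ (G.invol c x))]
    exact (h1 c hc).symm ▸ (h1 c hc)
  · by_cases hy : G.inv c x = v
    · rw [gVfun, gVfun, dif_neg hx, dif_pos hy]
      rw [edge_T G G' v v' B c hc (inv_inl_pos G G' v v' c ⟨x, hx⟩ hy)]
      exact h1 c hc
    · rw [gVfun, gVfun, dif_neg hx, dif_neg hy]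
      exact edge_T G G' v v' B c hc (inv_inl G G' v v' c ⟨x, hx⟩ hy)

private lemma gV'fun_edge (h1 : H1Prop G G' v v' B c₀) :
    ∀ x y : V', (∃ c ∈ B, G'.inv c x = y) → gV'fun G G' v v' B c₀ x = gV'fun G G' v v' B c₀ y := by
  rintro x y ⟨c, hc, rfl⟩
  by_cases hx : x = v'
  · subst hx
    have hy : G'.inv c x ≠ x := G'.no_fixed c x
    rw [gV'fun, gV'fun, dif_pos rfl, dif_neg hy]
    exact (h1 c hc).symm
  · by_cases hy : G'.inv c x = v'
    · rw [gV'fun, gV'fun, dif_neg hx, dif_pos hy]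
      rw [edge_T G G' v v' B c hc (inv_inr_pos G G' v v' c ⟨x, hx⟩ hy)]
      rw [edge_T G G' v v' B c hc
        (inv_inl_pos G G' v v' c ⟨G.inv c v, G.no_fixed c v⟩ (G.invol c v))]
      exact h1 c hc
    · rw [gV'fun, gV'fun, dif_neg hx, dif_neg hy]
      exact edge_T G G' v v' B c hc (inv_inr G G' v v' c ⟨x, hx⟩ hy)

private noncomputable def f0 :
    ({w : V // w ≠ v} ⊕ {w : V' // w ≠ v'}) →
      {x : Quotient (sC G B) ⊕ Quotient (sC G' B) // x ≠ Sum.inr (Quotient.mk (sC G' B) v')} :=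
  fun x => match x with
  | Sum.inl w => ⟨Sum.inl (Quotient.mk _ w.val), by simp⟩
  | Sum.inr w =>
      if h : Quotient.mk (sC G' B) w.val = Quotient.mk (sC G' B) v' then
        ⟨Sum.inl (Quotient.mk (sC G B) v), by simp⟩
      else ⟨Sum.inr (Quotient.mk (sC G' B) w.val), by simpa using h⟩

private lemma f0_edge :
    ∀ x y, (∃ c ∈ B, (G.connSum G' v v').inv c x = y) →
      f0 G G' v v' B x = f0 G G' v v' B y := by
  rintro x y ⟨c, hc, rfl⟩
  rcases x with w | w
  · by_cases hcase : G.inv c w.val = v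
    · rw [inv_inl_pos G G' v v' c w hcase]
      have hq : Quotient.mk (sC G' B) (G'.inv c v') = Quotient.mk (sC G' B) v' :=
        edge_C c hc (G'.invol c v')
      rw [f0, f0]
      rw [dif_pos hq]
      exact Subtype.ext (congrArg Sum.inl (edge_C c hc hcase))
    · rw [inv_inl G G' v v' c w hcase]
      rw [f0, f0]
      exact Subtype.ext (congrArg Sum.inl (edge_C c hc rfl))
  · by_cases hcase : G'.inv c w.val = v'
    · rw [inv_inr_pos G G' v v' c w hcase]
      have hq : Quotient.mk (sC G' B) w.val = Quotient.mk (sC G' B) v' := edge_C c hc hcase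
      rw [f0, f0, dif_pos hq]
      exact Subtype.ext (congrArg Sum.inl (edge_C c hc (G.invol c v)).symm)
    · rw [inv_inr G G' v v' c w hcase]
      have hq : Quotient.mk (sC G' B) w.val = Quotient.mk (sC G' B) (G'.inv c w.val) :=
        edge_C c hc rfl
      rw [f0, f0]
      by_cases hcond : Quotient.mk (sC G' B) w.val = Quotient.mk (sC G' B) v'
      · rw [dif_pos hcond, dif_pos (hq.symm.trans hcond)]
      · rw [dif_neg hcond, dif_neg (fun hh => hcond (hq.trans hh))]
        exact Subtype.ext (congrArg Sum.inr hq)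

private noncomputable def finv (h1 : H1Prop G G' v v' B c₀) :
    {x : Quotient (sC G B) ⊕ Quotient (sC G' B) // x ≠ Sum.inr (Quotient.mk (sC G' B) v')} →
      Quotient (sT G G' v v' B) :=
  fun x => Sum.elim
    (Quotient.lift (gVfun G G' v v' B c₀)
      (fun a b h => eqvGen_constant (gVfun_edge G G' v v' B c₀ h1) a b h))
    (Quotient.lift (gV'fun G G' v v' B c₀)
      (fun a b h => eqvGen_constant (gV'fun_edge G G' v v' B c₀ h1) a b h))
    x.val

private lemma left_inv_aux (h1 : H1Prop G G' v v' B c₀) :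
    ∀ x, finv G G' v v' B c₀ h1 (f0 G G' v v' B x) = Quotient.mk (sT G G' v v' B) x := by
  rintro (⟨wv, hw⟩ | ⟨wv, hw⟩)
  · show gVfun G G' v v' B c₀ wv = Quotient.mk (sT G G' v v' B) (Sum.inl ⟨wv, hw⟩)
    rw [gVfun, dif_neg hw]
  · rw [f0]
    by_cases hcond : Quotient.mk (sC G' B) wv = Quotient.mk (sC G' B) v'
    · rw [dif_pos hcond]
      show gVfun G G' v v' B c₀ v = Quotient.mk (sT G G' v v' B) (Sum.inr ⟨wv, hw⟩)
      rw [gVfun, dif_pos rfl]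
      have key := congrArg
        (Quotient.lift (gV'fun G G' v v' B c₀)
          (fun a b h => eqvGen_constant (gV'fun_edge G G' v v' B c₀ h1) a b h)) hcond
      have k1 : Quotient.lift (gV'fun G G' v v' B c₀)
          (fun a b h => eqvGen_constant (gV'fun_edge G G' v v' B c₀ h1) a b h)
          (Quotient.mk (sC G' B) wv) = gV'fun G G' v v' B c₀ wv := rfl
      have k2 : Quotient.lift (gV'fun G G' v v' B c₀)
          (fun a b h => eqvGen_constant (gV'fun_edge G G' v v' B c₀ h1) a b h)
          (Quotient.mk (sC G' B) v') = gV'fun G G' v v' B c₀ v' := rfl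
      rw [k1, k2, gV'fun, gV'fun, dif_neg hw, dif_pos rfl] at key
      exact key.symm
    · rw [dif_neg hcond]
      show gV'fun G G' v v' B c₀ wv = Quotient.mk (sT G G' v v' B) (Sum.inr ⟨wv, hw⟩)
      rw [gV'fun, dif_neg hw]

private lemma right_inv_aux (hc₀ : c₀ ∈ B) (h1 : H1Prop G G' v v' B c₀) :
    ∀ x, Quotient.lift (f0 G G' v v' B)
      (fun a b h => eqvGen_constant (f0_edge G G' v v' B) a b h)
      (finv G G' v v' B c₀ h1 x) = x := by
  rintro ⟨p, hp⟩
  rcases p with q | q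
  · induction q using Quotient.ind with
    | _ w =>
      show Quotient.lift (f0 G G' v v' B)
        (fun a b h => eqvGen_constant (f0_edge G G' v v' B) a b h)
        (gVfun G G' v v' B c₀ w) = ⟨Sum.inl (Quotient.mk (sC G B) w), hp⟩
      by_cases hw : w = v
      · rw [gVfun, dif_pos hw, weld]
        show f0 G G' v v' B (Sum.inr ⟨G'.inv c₀ v', G'.no_fixed c₀ v'⟩) =
          ⟨Sum.inl (Quotient.mk (sC G B) w), hp⟩
        rw [f0]
        have hq : Quotient.mk (sC G' B) (G'.inv c₀ v') = Quotient.mk (sC G' B) v' :=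
          edge_C c₀ hc₀ (G'.invol c₀ v')
        rw [dif_pos hq]
        exact Subtype.ext (by subst hw; rfl)
      · rw [gVfun, dif_neg hw]
        show f0 G G' v v' B (Sum.inl ⟨w, hw⟩) = ⟨Sum.inl (Quotient.mk (sC G B) w), hp⟩
        rfl
  · induction q using Quotient.ind with
    | _ w =>
      have hq : Quotient.mk (sC G' B) w ≠ Quotient.mk (sC G' B) v' := by
        intro h; exact hp (by rw [h])
      have hw : w ≠ v' := by intro h; exact hq (by rw [h])
      show Quotient.lift (f0 G G' v v' B)
        (fun a b h => eqvGen_constant (f0_edge G G' v v' B) a b h)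
        (gV'fun G G' v v' B c₀ w) = ⟨Sum.inr (Quotient.mk (sC G' B) w), hp⟩
      rw [gV'fun, dif_neg hw]
      show f0 G G' v v' B (Sum.inr ⟨w, hw⟩) = ⟨Sum.inr (Quotient.mk (sC G' B) w), hp⟩
      rw [f0, dif_neg hq]

private lemma merge_card [Finite V] [Finite V'] (hc₀ : c₀ ∈ B)
    (h1 : H1Prop G G' v v' B c₀) :
    (G.connSum G' v v').g B + 1 = G.g B + G'.g B := by
  have hbij : Function.Bijective
      (Quotient.lift (f0 G G' v v' B)
        (fun a b h => eqvGen_constant (f0_edge G G' v v' B) a b h) :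
        Quotient (sT G G' v v' B) → _) := by
    rw [Function.bijective_iff_has_inverse]
    refine ⟨finv G G' v v' B c₀ h1, ?_, ?_⟩
    · intro q
      induction q using Quotient.ind with
      | _ x => exact left_inv_aux G G' v v' B c₀ h1 x
    · intro x
      exact right_inv_aux G G' v v' B c₀ hc₀ h1 x
  have hcard : Nat.card (Quotient (sT G G' v v' B)) =
      Nat.card {x : Quotient (sC G B) ⊕ Quotient (sC G' B) //
        x ≠ Sum.inr (Quotient.mk (sC G' B) v')} :=
    Nat.card_eq_of_bijective _ hbij
  have h2 := card_ne_add_one (Sum.inr (Quotient.mk (sC G' B) v') :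
    Quotient (sC G B) ⊕ Quotient (sC G' B))
  have h3 : Nat.card (Quotient (sC G B) ⊕ Quotient (sC G' B)) =
      Nat.card (Quotient (sC G B)) + Nat.card (Quotient (sC G' B)) := Nat.card_sum
  show Nat.card (Quotient (sT G G' v v' B)) + 1 = _
  rw [hcard, h2, h3]
  rfl

end Merge

end CGraph
namespace CGraph

section H1

variable {C V V' : Type} [DecidableEq V] [DecidableEq V'] [Finite V']
variable (G : CGraph C V) (G' : CGraph C V') (v : V) (v' : V')

private lemma h1_of_path (B : Set C) (c₀ : C) (hc₀ : c₀ ∈ B)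
    (hcol : ∀ c ∈ B, gV'fun G G' v v' B c₀ (G'.inv c₀ v') = gV'fun G G' v v' B c₀ (G'.inv c v')) :
    H1Prop G G' v v' B c₀ := by
  intro c hc
  have key := hcol c hc
  rw [gV'fun, gV'fun, dif_neg (G'.no_fixed c₀ v'), dif_neg (G'.no_fixed c v')] at key
  exact key.symm

private lemma path_step (B : Set C) (c₀ : C) (c : C) (hc : c ∈ B) :
    ∀ x, x ≠ v' → G'.inv c x ≠ v' →
      gV'fun G G' v v' B c₀ x = gV'fun G G' v v' B c₀ (G'.inv c x) := by
  intro x hx h2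
  rw [gV'fun, gV'fun, dif_neg hx, dif_neg h2]
  exact edge_T G G' v v' B c hc (inv_inr G G' v v' c ⟨x, hx⟩ h2)

private lemma h1_two_colors (B : Set C) (c₀ c : C) (hc₀ : c₀ ∈ B) (hc : c ∈ B) :
    gV'fun G G' v v' B c₀ (G'.inv c₀ v') = gV'fun G G' v v' B c₀ (G'.inv c v') :=
  two_color_path (G'.inv c₀) (G'.inv c) (G'.invol c₀) (G'.invol c)
    (G'.no_fixed c₀) (G'.no_fixed c) v'
    (fun x y => gV'fun G G' v v' B c₀ x = gV'fun G G' v v' B c₀ y)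
    ⟨fun _ => rfl, fun h => h.symm, fun h1 h2 => h1.trans h2⟩
    (path_step G G' v v' B c₀ c₀ hc₀)
    (path_step G G' v v' B c₀ c hc)

private lemma h1_pair (c c' : C) : H1Prop G G' v v' {c, c'} c := by
  apply h1_of_path G G' v v' {c, c'} c (Set.mem_insert _ _)
  intro col hcol
  exact h1_two_colors G G' v v' {c, c'} c col (Set.mem_insert _ _) hcol

private lemma h1_univ (c₀ : C) : H1Prop G G' v v' Set.univ c₀ := by
  apply h1_of_path G G' v v' Set.univ c₀ (Set.mem_univ _)
  intro col hcol
  exact h1_two_colors G G' v v' Set.univ c₀ col (Set.mem_univ _) (Set.mem_univ _)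

end H1

section GLemmas

variable {C V V' : Type} [DecidableEq V] [DecidableEq V'] [Finite V] [Finite V']
variable (G : CGraph C V) (G' : CGraph C V') (v : V) (v' : V')

private lemma g_pair (c c' : C) :
    (G.connSum G' v v').g {c, c'} + 1 = G.g {c, c'} + G'.g {c, c'} :=
  merge_card G G' v v' {c, c'} c (Set.mem_insert _ _) (h1_pair G G' v v' c c')

private lemma g_univ_merge (c₀ : C) :
    (G.connSum G' v v').g Set.univ + 1 = G.g Set.univ + G'.g Set.univ :=
  merge_card G G' v v' Set.univ c₀ (Set.mem_univ _) (h1_univ G G' v v' c₀)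

end GLemmas

end CGraph

open CGraph in
/-- Proposition `prop:combCsum`: the G-degree is additive with respect to
graph connected sums: `ω_G(Γ #_{vv'} Γ') = ω_G(Γ) + ω_G(Γ')`. -/
theorem stmt3 {d : ℕ} (hd : 2 ≤ d) {V V' : Type} [Finite V] [Finite V']
    [DecidableEq V] [DecidableEq V']
    (G : CGraph (Fin (d + 1)) V) (G' : CGraph (Fin (d + 1)) V')
    (hconn : G.Conn) (hconn' : G'.Conn) (v : V) (v' : V') :
    (G.connSum G' v v').omegaG = G.omegaG + G'.omegaG := by
  classical
  have hVT : (Nat.card ({w : V // w ≠ v} ⊕ {w : V' // w ≠ v'}) : ℚ) =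
      (Nat.card V : ℚ) + (Nat.card V' : ℚ) - 2 := by
    have h1 : Nat.card {w : V // w ≠ v} + 1 = Nat.card V := card_ne_add_one v
    have h2 : Nat.card {w : V' // w ≠ v'} + 1 = Nat.card V' := card_ne_add_one v'
    rw [Nat.card_sum, ← h1, ← h2]
    push_cast
    ring
  have hgp : ∀ c c' : Fin (d + 1), ((G.connSum G' v v').g {c, c'} : ℚ) =
      (G.g {c, c'} : ℚ) + (G'.g {c, c'} : ℚ) - 1 := by
    intro c c'
    have h := congrArg (Nat.cast : ℕ → ℚ) (g_pair G G' v v' c c')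
    push_cast at h
    linarith
  have hgu : (G.connSum G' v v').g Set.univ = 1 := by
    have h := g_univ_merge G G' v v' (0 : Fin (d + 1))
    rw [show G.g Set.univ = 1 from hconn, show G'.g Set.univ = 1 from hconn'] at h
    omega
  have hchi : ∀ σ : Equiv.Perm (Fin (d + 1)),
      (G.connSum G' v v').chi σ = G.chi σ + G'.chi σ - 2 := by
    intro σ
    rw [chi, chi, chi]
    rw [finsum_eq_sum_of_fintype, finsum_eq_sum_of_fintype, finsum_eq_sum_of_fintype]
    rw [show (∑ c : Fin (d + 1), ((G.connSum G' v v').g {c, σ c} : ℚ)) =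
        ∑ c : Fin (d + 1), ((G.g {c, σ c} : ℚ) + (G'.g {c, σ c} : ℚ) - 1) from
      Finset.sum_congr rfl (fun c _ => hgp c (σ c))]
    rw [Finset.sum_sub_distrib, Finset.sum_add_distrib, Finset.sum_const,
      Finset.card_univ, Fintype.card_fin]
    rw [hVT, Nat.card_eq_fintype_card, Fintype.card_fin]
    push_cast
    ring
  have hrho : ∀ σ : Equiv.Perm (Fin (d + 1)),
      (G.connSum G' v v').rho σ = G.rho σ + G'.rho σ := by
    intro σ
    rw [rho, rho, rho, hchi σ, hgu, show G.g Set.univ = 1 from hconn,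
      show G'.g Set.univ = 1 from hconn']
    push_cast
    ring
  haveI : Fintype {σ : Equiv.Perm (Fin (d + 1)) // IsCyclicPerm σ} := Fintype.ofFinite _
  rw [omegaG, omegaG, omegaG]
  rw [finsum_eq_sum_of_fintype, finsum_eq_sum_of_fintype, finsum_eq_sum_of_fintype]
  rw [show (∑ σ : {σ : Equiv.Perm (Fin (d + 1)) // IsCyclicPerm σ},
      (G.connSum G' v v').rho σ.val) =
      ∑ σ : {σ : Equiv.Perm (Fin (d + 1)) // IsCyclicPerm σ},
        (G.rho σ.val + G'.rho σ.val) from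
    Finset.sum_congr rfl (fun σ _ => hrho σ.val)]
  rw [Finset.sum_add_distrib]
  ring
end
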